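/- arXiv:1710.06757 — 6 statements merged into one kernel-verified Lean document; each statement's English description precedes it below -/
import Mathlib

section
/- A 0/1-sequence (b_1,...,b_{2n}) is the outdegree sequence of some non-crossing perfect matching on 2n points in convex position if and only if it is a ballot sequence: it has exactly n ones and every prefix of length l satisfies sum_{i=1}^{l} b_i >= l/2. -/
/-- A plane (non-crossing) perfect matching on the `2n` points `0, …, 2n-1`
in convex position. -/
structure NCMatching (n : ℕ) where
  pairs : Finset (ℕ × ℕ)
  mem_lt : ∀ p ∈ pairs, p.1 < p.2 ∧ p.2 < 2 * n
  covers : ∀ v, v < 2 * n → ∃! p, p ∈ pairs ∧ (p.1 = v ∨ p.2 = v)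
  noncross : ∀ p ∈ pairs, ∀ q ∈ pairs, ¬ (p.1 < q.1 ∧ q.1 < p.2 ∧ p.2 < q.2)

/-- Outdegree of vertex `v` (1 if `v` is matched to a larger vertex, else 0). -/
def NCMatching.out {n : ℕ} (M : NCMatching n) (v : ℕ) : ℕ :=
  (M.pairs.filter fun p => p.1 = v).card

/-- The outdegree sequence `(b_1, …, b_{2n})` of a matching. -/
def NCMatching.outList {n : ℕ} (M : NCMatching n) : List ℕ :=
  (List.range (2 * n)).map M.out

/-- A triangulation of the convex polygon with vertices `0, …, n+1` in convex
position: a maximal set of pairwise non-crossing diagonals (`n-1` many). -/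
structure Triangulation (n : ℕ) where
  diag : Finset (ℕ × ℕ)
  isDiag : ∀ e ∈ diag, e.1 + 2 ≤ e.2 ∧ e.2 ≤ n + 1 ∧ ¬(e.1 = 0 ∧ e.2 = n + 1)
  noncross : ∀ e ∈ diag, ∀ f ∈ diag, ¬ (e.1 < f.1 ∧ f.1 < e.2 ∧ e.2 < f.2)
  card_diag : diag.card = n - 1

/-- Outdegree of point `i` in a triangulation: edges are directed from lower to
higher index; hull edges are not counted, except `p_1 p_{n+2}` (counted at `0`). -/
def Triangulation.out {n : ℕ} (T : Triangulation n) (i : ℕ) : ℕ :=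
  (T.diag.filter fun e => e.1 = i).card + (if i = 0 then 1 else 0)

/-- The outdegree sequence `(d_1, …, d_n)` of a triangulation. -/
def Triangulation.outList {n : ℕ} (T : Triangulation n) : List ℕ :=
  (List.range n).map T.out

/-- Ballot sequences of length `2n`: 0/1 sequences with `n` ones whose every
prefix has at least as many ones as zeros. -/
def IsBallot (n : ℕ) (l : List ℕ) : Prop :=
  l.length = 2 * n ∧ (∀ x ∈ l, x = 0 ∨ x = 1) ∧ l.sum = n ∧
    ∀ m, m ≤ 2 * n → m ≤ 2 * (l.take m).sum

/-- Valid outdegree sequences of triangulations of a convex `(n+2)`-gon. -/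
def IsTriDeg (n : ℕ) (d : List ℕ) : Prop :=
  d.length = n ∧ d.sum = n ∧ ∀ l, l ≤ n → (d.reverse.take l).sum ≤ l

/-- From a degree sequence `(d_1,…,d_n)` to the ballot sequence consisting of
`d_i` ones followed by a zero, for each `i`. -/
def degToBallot (d : List ℕ) : List ℕ :=
  (d.map fun x => List.replicate x 1 ++ [0]).flatten

/-- From a ballot sequence `B` to the sequence `(d_1,…,d_n)` where `d_i` is the
number of ones between the `(i-1)`-st and the `i`-th zero of `B`. -/
def ballotToDeg (B : List ℕ) : List ℕ :=
  ((B.splitOn 0).map List.length).dropLast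

/-- The bitonic `k`-coloring `c_1,…,c_k,c_k,…,c_1,c_1,…` of the vertices. -/
def bitColor (k i : ℕ) : ℕ :=
  if (i / k) % 2 = 0 then i % k else k - 1 - i % k

/-- A perfect `k`-colored (monochromatic) matching: every edge joins two
vertices of the same color. -/
def Mono (k : ℕ) {n : ℕ} (M : NCMatching n) : Prop :=
  ∀ p ∈ M.pairs, bitColor k p.1 = bitColor k p.2

/-- Valid block structure: within each block of `k` consecutive vertices, every
vertex with an outgoing edge is followed only by vertices with outgoing edges. -/
def ValidBlock (k : ℕ) {n : ℕ} (M : NCMatching n) : Prop :=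
  ∀ u v, v < 2 * n → u / k = v / k → u < v → M.out u = 1 → M.out v = 1

/-- The hull edges of the convex polygon on `0, …, n+1`. -/
def hullEdges (n : ℕ) : Finset (ℕ × ℕ) :=
  ((Finset.range (n + 1)).image fun i => (i, i + 1)) ∪ {(0, n + 1)}

/-- The edges of the face with vertex set `S` (in convex position): consecutive
pairs of `S` together with the pair `(min S, max S)`. -/
def faceEdges (S : Finset ℕ) : Finset (ℕ × ℕ) :=
  (S ×ˢ S).filter fun p => p.1 < p.2 ∧
    ((∀ c ∈ S, ¬ (p.1 < c ∧ c < p.2)) ∨ (∀ c ∈ S, p.1 ≤ c ∧ c ≤ p.2))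

/-- A `t`-gonal tiling of the convex polygon on the points `0, …, n+1`:
a plane graph all of whose bounded faces are `t`-gons, given by its set of
(bounded) faces. -/
structure Tiling (t n : ℕ) where
  faces : Finset (Finset ℕ)
  sub : ∀ S ∈ faces, S ⊆ Finset.range (n + 2)
  size : ∀ S ∈ faces, S.card = t
  noncross : ∀ S ∈ faces, ∀ S' ∈ faces, ∀ e ∈ faceEdges S, ∀ e' ∈ faceEdges S',
      ¬ (e.1 < e'.1 ∧ e'.1 < e.2 ∧ e.2 < e'.2)
  share : ∀ S ∈ faces, ∀ S' ∈ faces, S ≠ S' → (S ∩ S').card ≤ 2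
  boundary : ∀ e ∈ hullEdges n, (faces.filter fun S => e ∈ faceEdges S).card = 1
  interior : ∀ S ∈ faces, ∀ e ∈ faceEdges S, e ∉ hullEdges n →
      (faces.filter fun S' => e ∈ faceEdges S').card = 2

/-- The dual graph of a tiling: one vertex per bounded face, two faces adjacent
iff they share a common edge. -/
def dualGraph {t n : ℕ} (T : Tiling t n) : SimpleGraph {S // S ∈ T.faces} where
  Adj A B := A ≠ B ∧ (faceEdges A.1 ∩ faceEdges B.1).Nonempty
  symm := by
    constructor
    rintro A B ⟨h1, h2⟩
    exact ⟨Ne.symm h1, by rwa [Finset.inter_comm]⟩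
  loopless := by constructor; rintro A ⟨h, -⟩; exact h rfl

/-- An ear of a tiling: a face all but one of whose edges lie on the hull. -/
def IsEar {t n : ℕ} (T : Tiling t n) (S : Finset ℕ) : Prop :=
  S ∈ T.faces ∧ (faceEdges S \ hullEdges n).card = 1

/-- A tiling is a subgraph of a triangulation if each of its non-hull edges is
a diagonal of the triangulation. -/
def SubTri {t n : ℕ} (T : Tiling t n) (𝒯 : Triangulation n) : Prop :=
  ∀ S ∈ T.faces, ∀ e ∈ faceEdges S, e ∉ hullEdges n → e ∈ 𝒯.diag

/-- A triangulation is `k`-color valid if, under the outdegree-sequence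
bijection, it corresponds to a perfect `k`-colored matching. -/
def KColorValidTri (k : ℕ) {n : ℕ} (𝒯 : Triangulation n) : Prop :=
  ∃ M : NCMatching n, Mono k M ∧ M.outList = degToBallot 𝒯.outList

/-- A `(k+2)`-gonal tiling is `k`-color valid if it is a subgraph of some
`k`-color valid triangulation. -/
def KColorValidTiling (k : ℕ) {n : ℕ} (T : Tiling (k + 2) n) : Prop :=
  ∃ 𝒯 : Triangulation n, KColorValidTri k 𝒯 ∧ SubTri T 𝒯

def bHt (l : List ℕ) (m : ℕ) : ℤ := 2 * ((l.take m).sum : ℤ) - m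

def bPairs (n : ℕ) (l : List ℕ) : Finset (ℕ × ℕ) :=
  (Finset.range (2*n) ×ˢ Finset.range (2*n)).filter fun p =>
    p.1 < p.2 ∧ l.getD p.1 0 = 1 ∧ l.getD p.2 0 = 0 ∧
      bHt l p.2 = bHt l p.1 + 1 ∧ ∀ m ∈ Finset.Ioc p.1 p.2, bHt l p.1 + 1 ≤ bHt l m

lemma bHt_step (l : List ℕ) (m : ℕ) (hm : m < l.length) :
    bHt l (m+1) = bHt l m + (2 * (l.getD m 0 : ℤ) - 1) := by
  unfold bHt
  rw [List.sum_take_succ _ _ hm, List.getD_eq_getElem _ _ hm]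
  push_cast
  ring

lemma getD_01 (l : List ℕ) (h01 : ∀ x ∈ l, x = 0 ∨ x = 1) (m : ℕ) (hm : m < l.length) :
    l.getD m 0 = 0 ∨ l.getD m 0 = 1 := by
  rw [List.getD_eq_getElem _ _ hm]
  exact h01 _ (List.getElem_mem _)

lemma bHt_step_up (l : List ℕ) (m : ℕ) (hm : m < l.length) (h : l.getD m 0 = 1) :
    bHt l (m+1) = bHt l m + 1 := by rw [bHt_step l m hm, h]; push_cast; ring

lemma bHt_step_down (l : List ℕ) (m : ℕ) (hm : m < l.length) (h : l.getD m 0 = 0) :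
    bHt l (m+1) = bHt l m - 1 := by rw [bHt_step l m hm, h]; push_cast; ring

lemma mem_bPairs (n : ℕ) (l : List ℕ) (a b : ℕ) :
    (a, b) ∈ bPairs n l ↔ a < b ∧ b < 2*n ∧ l.getD a 0 = 1 ∧ l.getD b 0 = 0 ∧
      bHt l b = bHt l a + 1 ∧ ∀ m, a < m → m ≤ b → bHt l a + 1 ≤ bHt l m := by
  simp only [bPairs, Finset.mem_filter, Finset.mem_product, Finset.mem_range, Finset.mem_Ioc]
  constructor
  · rintro ⟨⟨h1, h2⟩, h3, h4, h5, h6, h7⟩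
    exact ⟨h3, h2, h4, h5, h6, fun m hm1 hm2 => h7 m ⟨hm1, hm2⟩⟩
  · rintro ⟨h3, h2, h4, h5, h6, h7⟩
    exact ⟨⟨lt_trans h3 h2, h2⟩, h3, h4, h5, h6, fun m hm => h7 m hm.1 hm.2⟩

section Main
variable {n : ℕ} {l : List ℕ}

lemma bHt_nonneg (hpre : ∀ m, m ≤ 2 * n → m ≤ 2 * (l.take m).sum) :
    ∀ m, m ≤ 2*n → 0 ≤ bHt l m := by
  intro m hm
  have := hpre m hm
  unfold bHt
  omega

lemma bHt_end (hlen : l.length = 2 * n) (hsum : l.sum = n) : bHt l (2*n) = 0 := by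
  unfold bHt
  rw [List.take_of_length_le (le_of_eq hlen), hsum]
  push_cast
  ring

lemma bHt_zero : bHt l 0 = 0 := by simp [bHt]

lemma exists_closer (h01 : ∀ x ∈ l, x = 0 ∨ x = 1) (hlen : l.length = 2 * n)
    (hsum : l.sum = n) (hpre : ∀ m, m ≤ 2 * n → m ≤ 2 * (l.take m).sum)
    (v : ℕ) (hv : v < 2*n) (hv1 : l.getD v 0 = 1) :
    ∃ j, (v, j) ∈ bPairs n l := by
  have hnn := bHt_nonneg hpre
  classical
  have hP : ∃ t, v < t ∧ t ≤ 2*n ∧ bHt l t ≤ bHt l v :=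
    ⟨2*n, hv, le_refl _, by rw [bHt_end hlen hsum]; exact hnn v (le_of_lt hv)⟩
  obtain ⟨t, htv, ht2n, htle, hmin⟩ :
      ∃ t, v < t ∧ t ≤ 2*n ∧ bHt l t ≤ bHt l v ∧
        ∀ m, v < m → m < t → bHt l v + 1 ≤ bHt l m := by
    refine ⟨Nat.find hP, (Nat.find_spec hP).1, (Nat.find_spec hP).2.1,
      (Nat.find_spec hP).2.2, ?_⟩
    intro m h1 h2
    have h3 := Nat.find_min hP h2
    push_neg at h3
    have := h3 h1 (le_trans h2.le (Nat.find_spec hP).2.1)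
    omega
  have hstep_v : bHt l (v+1) = bHt l v + 1 := bHt_step_up l v (by omega) hv1
  have htv2 : v + 2 ≤ t := by
    by_contra h
    have : t = v + 1 := by omega
    rw [this] at htle
    omega
  have hjt : (t - 1) + 1 = t := by omega
  have hjv : v < t - 1 := by omega
  have hjge : bHt l v + 1 ≤ bHt l (t-1) := hmin (t-1) hjv (by omega)
  have hj0 : l.getD (t-1) 0 = 0 := by
    rcases getD_01 l h01 (t-1) (by omega) with h | h
    · exact h
    · have h2 := bHt_step_up l (t-1) (by omega) h
      rw [hjt] at h2
      omega
  have hstep_j : bHt l t = bHt l (t-1) - 1 := by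
    have h2 := bHt_step_down l (t-1) (by omega) hj0
    rwa [hjt] at h2
  refine ⟨t - 1, (mem_bPairs n l v (t-1)).2 ⟨hjv, by omega, hv1, hj0, by omega, ?_⟩⟩
  intro m hm1 hm2
  exact hmin m hm1 (by omega)

lemma exists_opener (h01 : ∀ x ∈ l, x = 0 ∨ x = 1) (hlen : l.length = 2 * n)
    (hpre : ∀ m, m ≤ 2 * n → m ≤ 2 * (l.take m).sum)
    (v : ℕ) (hv : v < 2*n) (hv0 : l.getD v 0 = 0) :
    ∃ i, (i, v) ∈ bPairs n l := by
  have hnn := bHt_nonneg hpre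
  classical
  have hv1 : 1 ≤ bHt l v := by
    have h1 := bHt_step_down l v (by omega) hv0
    have := hnn (v+1) (by omega)
    omega
  obtain ⟨s, hQs, hsv', hmax⟩ :
      ∃ s, bHt l s < bHt l v ∧ s ≤ v ∧ ∀ m, s < m → m ≤ v → bHt l v ≤ bHt l m := by
    refine ⟨Nat.findGreatest (fun s => bHt l s < bHt l v) v, ?_, Nat.findGreatest_le v, ?_⟩
    · exact Nat.findGreatest_spec (P := fun s => bHt l s < bHt l v) (Nat.zero_le v)
        (show bHt l 0 < bHt l v by rw [bHt_zero]; omega)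
    · intro m h1 h2
      have := Nat.findGreatest_is_greatest h1 h2
      simp only [not_lt] at this
      exact this
  have hsv : s < v := by
    rcases Nat.lt_or_ge s v with h | h
    · exact h
    · exfalso; have hh : s = v := by omega
      rw [hh] at hQs; exact absurd hQs (lt_irrefl _)
  have hs1 : bHt l v ≤ bHt l (s+1) := hmax (s+1) (by omega) (by omega)
  have hsl : s < l.length := by omega
  have hs1' : l.getD s 0 = 1 := by
    rcases getD_01 l h01 s hsl with h | h
    · exfalso
      have := bHt_step_down l s hsl h
      omega
    · exact h
  have hstep : bHt l (s+1) = bHt l s + 1 := bHt_step_up l s hsl hs1'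
  refine ⟨s, (mem_bPairs n l s v).2 ⟨hsv, hv, hs1', hv0, by omega, ?_⟩⟩
  intro m hm1 hm2
  have := hmax m hm1 hm2
  omega

lemma closer_uniq (hlen : l.length = 2 * n) {v j j' : ℕ} (h1 : (v, j) ∈ bPairs n l)
    (h2 : (v, j') ∈ bPairs n l) : j = j' := by
  have key : ∀ a b : ℕ, (v, a) ∈ bPairs n l → (v, b) ∈ bPairs n l → a < b → False := by
    intro a b ha hb hab
    rw [mem_bPairs] at ha hb
    obtain ⟨hva, ha2n, -, ha0, haeq, -⟩ := ha
    obtain ⟨-, -, -, -, -, hint⟩ := hb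
    have hstep := bHt_step_down l a (by omega) ha0
    have := hint (a+1) (by omega) (by omega)
    omega
  rcases Nat.lt_trichotomy j j' with h | h | h
  · exact (key j j' h1 h2 h).elim
  · exact h
  · exact (key j' j h2 h1 h).elim

lemma opener_uniq {v i i' : ℕ} (h1 : (i, v) ∈ bPairs n l)
    (h2 : (i', v) ∈ bPairs n l) : i = i' := by
  have key : ∀ a b : ℕ, (a, v) ∈ bPairs n l → (b, v) ∈ bPairs n l → a < b → False := by
    intro a b ha hb hab
    rw [mem_bPairs] at ha hb
    obtain ⟨hav, -, -, -, haeq, hint⟩ := ha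
    obtain ⟨hbv, -, -, -, hbeq, -⟩ := hb
    have := hint b hab (by omega)
    omega
  rcases Nat.lt_trichotomy i i' with h | h | h
  · exact (key i i' h1 h2 h).elim
  · exact h
  · exact (key i' i h2 h1 h).elim

end Main

section Fwd

variable {n : ℕ} (M : NCMatching n)

lemma out_le_one (v : ℕ) : M.out v ≤ 1 := by
  by_cases hv : v < 2 * n
  · apply Finset.card_le_one.2
    intro p hp q hq
    rw [Finset.mem_filter] at hp hq
    exact ExistsUnique.unique (M.covers v hv) ⟨hp.1, Or.inl hp.2⟩ ⟨hq.1, Or.inl hq.2⟩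
  · have : M.pairs.filter (fun p => p.1 = v) = ∅ := by
      apply Finset.filter_eq_empty_iff.2
      intro p hp hc
      obtain ⟨h1, h2⟩ := M.mem_lt p hp
      omega
    rw [NCMatching.out, this]; simp

noncomputable def pairOf (v : ℕ) : ℕ × ℕ :=
  if hv : v < 2 * n then (M.covers v hv).exists.choose else (0, 0)

lemma pairOf_spec (v : ℕ) (hv : v < 2 * n) :
    pairOf M v ∈ M.pairs ∧ ((pairOf M v).1 = v ∨ (pairOf M v).2 = v) := by
  rw [pairOf, dif_pos hv]
  exact (M.covers v hv).exists.choose_spec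

lemma pairOf_uniq (v : ℕ) (hv : v < 2 * n) (q : ℕ × ℕ) (hq : q ∈ M.pairs)
    (hqv : q.1 = v ∨ q.2 = v) : q = pairOf M v :=
  ExistsUnique.unique (M.covers v hv) ⟨hq, hqv⟩ (pairOf_spec M v hv)

lemma card_pairs : M.pairs.card = n := by
  have h1 : (Finset.range (2*n)).card =
      ∑ p ∈ M.pairs, ((Finset.range (2*n)).filter fun v => pairOf M v = p).card := by
    apply Finset.card_eq_sum_card_fiberwise
    intro v hv
    exact (pairOf_spec M v (Finset.mem_range.1 hv)).1
  have h2 : ∀ p ∈ M.pairs, ((Finset.range (2*n)).filter fun v => pairOf M v = p)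
      = {p.1, p.2} := by
    intro p hp
    obtain ⟨hlt, h2n⟩ := M.mem_lt p hp
    ext v
    simp only [Finset.mem_filter, Finset.mem_range, Finset.mem_insert, Finset.mem_singleton]
    constructor
    · rintro ⟨hv, hfv⟩
      rcases (pairOf_spec M v hv).2 with h | h
      · left; rw [hfv] at h; omega
      · right; rw [hfv] at h; omega
    · rintro (h | h)
      · subst h
        exact ⟨by omega, (pairOf_uniq M p.1 (by omega) p hp (Or.inl rfl)).symm⟩
      · subst h
        exact ⟨by omega, (pairOf_uniq M p.2 (by omega) p hp (Or.inr rfl)).symm⟩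
  rw [Finset.sum_congr rfl (fun p hp => by rw [h2 p hp])] at h1
  have h3 : ∀ p ∈ M.pairs, ({p.1, p.2} : Finset ℕ).card = 2 := by
    intro p hp
    exact Finset.card_pair (by have := (M.mem_lt p hp).1; omega)
  rw [Finset.sum_congr rfl h3, Finset.sum_const, Finset.card_range, smul_eq_mul] at h1
  omega

lemma sum_out : ∑ v ∈ Finset.range (2*n), M.out v = n := by
  have h1 : M.pairs.card = ∑ v ∈ Finset.range (2*n),
      (M.pairs.filter fun p => p.1 = v).card := by
    apply Finset.card_eq_sum_card_fiberwise
    intro p hp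
    obtain ⟨h1, h2⟩ := M.mem_lt p hp
    exact Finset.mem_range.2 (by omega)
  have h2 : ∑ v ∈ Finset.range (2*n), M.out v = M.pairs.card := h1.symm
  rw [h2, card_pairs M]

lemma prefix_out (m : ℕ) (hm : m ≤ 2*n) : m ≤ 2 * ∑ v ∈ Finset.range m, M.out v := by
  classical
  have hsplit : ((Finset.range m).filter (fun v => M.out v = 1)).card +
      ((Finset.range m).filter (fun v => ¬ M.out v = 1)).card = m := by
    rw [Finset.card_filter_add_card_filter_not, Finset.card_range]
  have hsumA : ∑ v ∈ Finset.range m, M.out v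
      = ((Finset.range m).filter (fun v => M.out v = 1)).card := by
    rw [← Finset.sum_filter_add_sum_filter_not (Finset.range m) (fun v => M.out v = 1)]
    have e1 : ∑ v ∈ (Finset.range m).filter (fun v => M.out v = 1), M.out v
        = ((Finset.range m).filter (fun v => M.out v = 1)).card := by
      rw [Finset.card_eq_sum_ones]
      apply Finset.sum_congr rfl
      intro v hv
      exact (Finset.mem_filter.1 hv).2
    have e2 : ∑ v ∈ (Finset.range m).filter (fun v => ¬ M.out v = 1), M.out v = 0 := by
      apply Finset.sum_eq_zero
      intro v hv
      have := (Finset.mem_filter.1 hv).2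
      have := out_le_one M v
      omega
    rw [e1, e2, add_zero]
  -- injection from the complement into A
  have hinj : ((Finset.range m).filter (fun v => ¬ M.out v = 1)).card
      ≤ ((Finset.range m).filter (fun v => M.out v = 1)).card := by
    apply Finset.card_le_card_of_injOn (fun v => (pairOf M v).1)
    · intro v hv
      rw [Finset.mem_coe, Finset.mem_filter, Finset.mem_range] at hv
      obtain ⟨hvm, hv1⟩ := hv
      have hv2n : v < 2 * n := by omega
      have hout0 : M.out v = 0 := by have := out_le_one M v; omega
      obtain ⟨hmem, hor⟩ := pairOf_spec M v hv2n
      have hne : (pairOf M v).1 ≠ v := by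
        intro h
        have : pairOf M v ∈ M.pairs.filter (fun p => p.1 = v) := Finset.mem_filter.2 ⟨hmem, h⟩
        have := Finset.card_pos.2 ⟨_, this⟩
        rw [NCMatching.out] at hout0
        omega
      have h2 : (pairOf M v).2 = v := hor.resolve_left hne
      obtain ⟨hlt, hlt2⟩ := M.mem_lt _ hmem
      have hout1 : M.out (pairOf M v).1 = 1 := by
        have hpos : 0 < M.out (pairOf M v).1 :=
          Finset.card_pos.2 ⟨_, Finset.mem_filter.2 ⟨hmem, rfl⟩⟩
        have := out_le_one M (pairOf M v).1
        omega
      rw [Finset.mem_coe, Finset.mem_filter, Finset.mem_range]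
      exact ⟨show (pairOf M v).1 < m by omega, hout1⟩
    · intro v hv v' hv' heq
      rw [Finset.coe_filter] at hv hv'
      simp only [Set.mem_setOf_eq, Finset.mem_range] at hv hv'
      obtain ⟨hvm, hv1⟩ := hv
      obtain ⟨hvm', hv1'⟩ := hv'
      have hv2n : v < 2 * n := by omega
      have hv2n' : v' < 2 * n := by omega
      obtain ⟨hmem, hor⟩ := pairOf_spec M v hv2n
      obtain ⟨hmem', hor'⟩ := pairOf_spec M v' hv2n'
      set u := (pairOf M v).1 with hu
      have hu2n : u < 2 * n := by
        have := M.mem_lt _ hmem; omega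
      have e1 : pairOf M v = pairOf M u := pairOf_uniq M u hu2n _ hmem (Or.inl rfl)
      have e2 : pairOf M v' = pairOf M u := pairOf_uniq M u hu2n _ hmem' (Or.inl heq.symm)
      -- second coordinates are v and v'
      have hout0 : M.out v = 0 := by have := out_le_one M v; omega
      have hout0' : M.out v' = 0 := by have := out_le_one M v'; omega
      have hne : (pairOf M v).1 ≠ v := by
        intro h
        have : pairOf M v ∈ M.pairs.filter (fun p => p.1 = v) := Finset.mem_filter.2 ⟨hmem, h⟩
        have := Finset.card_pos.2 ⟨_, this⟩
        rw [NCMatching.out] at hout0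
        omega
      have hne' : (pairOf M v').1 ≠ v' := by
        intro h
        have : pairOf M v' ∈ M.pairs.filter (fun p => p.1 = v') :=
          Finset.mem_filter.2 ⟨hmem', h⟩
        have := Finset.card_pos.2 ⟨_, this⟩
        rw [NCMatching.out] at hout0'
        omega
      have h2 : (pairOf M v).2 = v := hor.resolve_left hne
      have h2' : (pairOf M v').2 = v' := hor'.resolve_left hne'
      rw [← h2, ← h2', e1, e2]
  rw [hsumA]
  omega


end Fwd

lemma bPairs_out {n : ℕ} {l : List ℕ} (h01 : ∀ x ∈ l, x = 0 ∨ x = 1)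
    (hlen : l.length = 2 * n) (hsum : l.sum = n)
    (hpre : ∀ m, m ≤ 2 * n → m ≤ 2 * (l.take m).sum) (v : ℕ) (hv : v < 2*n) :
    ((bPairs n l).filter fun p => p.1 = v).card = l.getD v 0 := by
  rcases getD_01 l h01 v (by omega) with h0 | h1
  · rw [h0, Finset.card_eq_zero]
    apply Finset.filter_eq_empty_iff.2
    rintro ⟨a, b⟩ hab h
    obtain rfl : a = v := h
    rw [mem_bPairs] at hab
    omega
  · rw [h1, Finset.card_eq_one]
    obtain ⟨j, hj⟩ := exists_closer h01 hlen hsum hpre v hv h1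
    refine ⟨(v, j), ?_⟩
    ext ⟨a, b⟩
    simp only [Finset.mem_filter, Finset.mem_singleton, Prod.mk.injEq]
    constructor
    · rintro ⟨hab, h⟩
      obtain rfl : a = v := h
      exact ⟨rfl, closer_uniq hlen hab hj⟩
    · rintro ⟨rfl, rfl⟩
      exact ⟨hj, rfl⟩

/-- A 0/1-sequence is the outdegree sequence of some non-crossing perfect
matching on `2n` points iff it is a ballot sequence: it has exactly `n` ones
and every prefix of length `l` has sum at least `l/2`. -/
theorem stmt4 (n : ℕ) (l : List ℕ) (h01 : ∀ x ∈ l, x = 0 ∨ x = 1)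
    (hlen : l.length = 2 * n) :
    (∃ M : NCMatching n, M.outList = l) ↔
      (l.sum = n ∧ ∀ m, m ≤ 2 * n → m ≤ 2 * (l.take m).sum) := by
  constructor
  · rintro ⟨M, rfl⟩
    refine ⟨sum_out M, ?_⟩
    intro m hm
    have ht : (M.outList.take m).sum = ∑ v ∈ Finset.range m, M.out v := by
      rw [NCMatching.outList, ← List.map_take, List.take_range, Nat.min_eq_left hm]
      rfl
    rw [ht]
    exact prefix_out M m hm
  · rintro ⟨hsum, hpre⟩
    refine ⟨⟨bPairs n l, ?_, ?_, ?_⟩, ?_⟩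
    · rintro ⟨a, b⟩ hp
      rw [mem_bPairs] at hp
      exact ⟨hp.1, hp.2.1⟩
    · intro v hv
      rcases getD_01 l h01 v (by omega) with h0 | h1
      · obtain ⟨i, hi⟩ := exists_opener h01 hlen hpre v hv h0
        refine ⟨(i, v), ⟨hi, Or.inr rfl⟩, ?_⟩
        rintro ⟨a, b⟩ ⟨hab, hor⟩
        rcases hor with h | h
        · exfalso
          obtain rfl : a = v := h
          rw [mem_bPairs] at hab
          omega
        · obtain rfl : b = v := h
          rw [opener_uniq hab hi]
      · obtain ⟨j, hj⟩ := exists_closer h01 hlen hsum hpre v hv h1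
        refine ⟨(v, j), ⟨hj, Or.inl rfl⟩, ?_⟩
        rintro ⟨a, b⟩ ⟨hab, hor⟩
        rcases hor with h | h
        · obtain rfl : a = v := h
          rw [closer_uniq hlen hab hj]
        · exfalso
          obtain rfl : b = v := h
          rw [mem_bPairs] at hab
          omega
    · rintro ⟨a, b⟩ hp ⟨c, d⟩ hq ⟨h1, h2, h3⟩
      rw [mem_bPairs] at hp hq
      obtain ⟨-, -, -, -, hpeq, hpint⟩ := hp
      obtain ⟨-, -, -, -, -, hqint⟩ := hq
      have i1 := hpint c h1 (by omega)
      have i2 := hqint b h2 (by omega)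
      omega
    · refine List.ext_getElem (by simp [NCMatching.outList, hlen]) ?_
      intro i h1 h2
      have hi : i < 2 * n := by simpa [NCMatching.outList] using h1
      simp only [NCMatching.outList, List.getElem_map, List.getElem_range]
      rw [← List.getD_eq_getElem l 0 h2]
      exact bPairs_out h01 hlen hsum hpre i hi
end

section
/- Every non-crossing perfect matching is uniquely reconstructible from its outdegree sequence: two non-crossing perfect matchings on vertices 1,...,2n with the same outdegree sequence are equal. -/
/-- Two non-crossing perfect matchings on `2n` points with the same outdegree
sequence are equal. -/
theorem stmt5 (n : ℕ) (M M' : NCMatching n) (h : ∀ v, M.out v = M'.out v) :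
    M = M' := by
  have key : ∀ (A B : NCMatching n), (∀ v, A.out v = B.out v) → A.pairs ⊆ B.pairs := by
    intro A B hab
    have comp : ∀ a b : ℕ × ℕ, a = b → a.1 = b.1 ∧ a.2 = b.2 := by
      intro a b e; subst e; exact ⟨rfl, rfl⟩
    have main : ∀ g : ℕ, ∀ p ∈ A.pairs, p.2 - p.1 ≤ g → p ∈ B.pairs := by
      intro g
      induction g with
      | zero =>
        intro p hp hg
        have := (A.mem_lt p hp).1
        omega
      | succ g ih =>
        intro p hp hg
        obtain ⟨hlt, hlt2⟩ := A.mem_lt p hp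
        -- uniqueness of the pair containing u := p.1 and v := p.2 in A
        obtain ⟨pu, hpu, hpuU⟩ := A.covers p.1 (by omega)
        obtain ⟨pv, hpv, hpvU⟩ := A.covers p.2 (by omega)
        have hpu' : p = pu := hpuU p ⟨hp, Or.inl rfl⟩
        have hpv' : p = pv := hpvU p ⟨hp, Or.inr rfl⟩
        -- every vertex strictly between p.1 and p.2 is matched inside, in B
        have inner : ∀ w, p.1 < w → w < p.2 →
            ∃ q ∈ B.pairs, p.1 < q.1 ∧ q.2 < p.2 ∧ (q.1 = w ∨ q.2 = w) := by
          intro w hw1 hw2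
          obtain ⟨q, ⟨hq, hqw⟩, _⟩ := A.covers w (by omega)
          obtain ⟨hq12, hq2⟩ := A.mem_lt q hq
          have hq1lt : p.1 < q.1 ∧ q.2 < p.2 := by
            rcases hqw with h1 | h2
            · subst h1
              constructor
              · exact hw1
              · -- q.2 < p.2
                rcases lt_trichotomy q.2 p.2 with hc | hc | hc
                · exact hc
                · exfalso
                  have : q = pv := hpvU q ⟨hq, Or.inr hc⟩
                  rw [← hpv'] at this
                  obtain ⟨e1, e2⟩ := comp _ _ this
                  omega
                · exact absurd ⟨hw1, hw2, hc⟩ (A.noncross p hp q hq)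
            · subst h2
              refine ⟨?_, hw2⟩
              rcases lt_trichotomy q.1 p.1 with hc | hc | hc
              · exact absurd ⟨hc, by omega, hw2⟩ (A.noncross q hq p hp)
              · exfalso
                have : q = pu := hpuU q ⟨hq, Or.inl hc⟩
                rw [← hpu'] at this
                obtain ⟨e1, e2⟩ := comp _ _ this
                omega
              · exact hc
          refine ⟨q, ih q hq (by omega), hq1lt.1, hq1lt.2, hqw⟩
        -- B has a pair with first coordinate p.1
        have hBu : ∃ r ∈ B.pairs, r.1 = p.1 := by
          have h1 : 0 < (B.pairs.filter fun q => q.1 = p.1).card := by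
            rw [← NCMatching.out, ← hab, NCMatching.out]
            exact Finset.card_pos.2 ⟨p, Finset.mem_filter.2 ⟨hp, rfl⟩⟩
          obtain ⟨r, hr⟩ := Finset.card_pos.1 h1
          exact ⟨r, (Finset.mem_filter.1 hr).1, (Finset.mem_filter.1 hr).2⟩
        -- no pair in B has first coordinate p.2
        have hBv : ∀ q ∈ B.pairs, q.1 ≠ p.2 := by
          have hA0 : A.out p.2 = 0 := by
            rw [NCMatching.out, Finset.card_eq_zero, Finset.filter_eq_empty_iff]
            intro q hq hq1
            have : q = pv := hpvU q ⟨hq, Or.inl hq1⟩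
            rw [← hpv'] at this
            obtain ⟨e1, e2⟩ := comp _ _ this
            omega
          have hB0 : B.out p.2 = 0 := by rw [← hab]; exact hA0
          rw [NCMatching.out, Finset.card_eq_zero, Finset.filter_eq_empty_iff] at hB0
          exact hB0
        obtain ⟨r, hr, hr1⟩ := hBu
        obtain ⟨hr12, hr2⟩ := B.mem_lt r hr
        -- r.2 = p.2, giving r = p
        rcases lt_trichotomy r.2 p.2 with hc | hc | hc
        · -- r.2 strictly between p.1 and p.2: contradiction via inner
          exfalso
          obtain ⟨q, hq, hq1, hq2, hqw⟩ := inner r.2 (by omega) hc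
          obtain ⟨s, _, hsU⟩ := B.covers r.2 (by omega)
          have e1 : q = s := hsU q ⟨hq, hqw⟩
          have e2 : r = s := hsU r ⟨hr, Or.inr rfl⟩
          rw [← e1] at e2
          obtain ⟨f1, f2⟩ := comp _ _ e2
          omega
        · have : r = p := Prod.ext_iff.2 ⟨hr1, hc⟩
          rwa [← this]
        · -- r.2 > p.2: find B's pair s ending at p.2 and derive a crossing
          exfalso
          obtain ⟨s, ⟨hs, hsw⟩, hsU⟩ := B.covers p.2 (by omega)
          have hs2 : s.2 = p.2 := by
            rcases hsw with h1 | h2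
            · exact absurd h1 (hBv s hs)
            · exact h2
          obtain ⟨hs12, _⟩ := B.mem_lt s hs
          -- s.1 ≠ p.1
          have hsne : s.1 ≠ p.1 := by
            intro he
            obtain ⟨w, _, hwU⟩ := B.covers p.1 (by omega)
            have e1 : s = w := hwU s ⟨hs, Or.inl he⟩
            have e2 : r = w := hwU r ⟨hr, Or.inl hr1⟩
            rw [← e1] at e2
            obtain ⟨f1, f2⟩ := comp _ _ e2
            omega
          -- s.1 not strictly inside (p.1, p.2)
          have hslt : s.1 < p.1 := by
            rcases lt_trichotomy s.1 p.1 with hc2 | hc2 | hc2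
            · exact hc2
            · exact absurd hc2 hsne
            · exfalso
              obtain ⟨q, hq, hq1, hq2, hqw⟩ := inner s.1 hc2 (by omega)
              obtain ⟨w, _, hwU⟩ := B.covers s.1 (by omega)
              have e1 : q = w := hwU q ⟨hq, hqw⟩
              have e2 : s = w := hwU s ⟨hs, Or.inl rfl⟩
              rw [← e1] at e2
              obtain ⟨f1, f2⟩ := comp _ _ e2
              omega
          exact B.noncross s hs r hr ⟨by omega, by omega, by omega⟩
    intro p hp
    exact main (p.2 - p.1) p hp le_rfl
  have hpairs : M.pairs = M'.pairs :=
    subset_antisymm (key M M' h) (key M' M fun v => (h v).symm)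
  cases M
  cases M'
  simp only at hpairs
  subst hpairs
  rfl
end

section
/- A sequence of nonnegative integers (d_1,...,d_n) is the outdegree sequence of some triangulation of a convex (n+2)-gon if and only if sum_{i=1}^n d_i = n and for every l with 1 <= l <= n, sum_{i=1}^{l} d_{n+1-i} <= l. -/

lemma sum_map_range (f : ℕ → ℕ) (n : ℕ) :
    ((List.range n).map f).sum = ∑ i ∈ Finset.range n, f i := by
  induction n with
  | zero => simp
  | succ n ih => rw [List.range_succ, List.map_append, List.sum_append, Finset.sum_range_succ, ih]; simp

lemma getD_map_range (f : ℕ → ℕ) (n i : ℕ) (h : i < n) :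
    ((List.range n).map f).getD i 0 = f i := by
  simp [List.getD_eq_getElem?_getD, List.getElem?_map, List.getElem?_range h]

lemma take_sum : ∀ (d : List ℕ) (m : ℕ), m ≤ d.length → (d.take m).sum = ∑ i ∈ Finset.range m, d.getD i 0 := by
  intro d
  induction d with
  | nil => intro m hm; simp at hm; simp [hm]
  | cons a t iht =>
    intro m hm
    cases m with
    | zero => simp
    | succ m =>
      rw [List.take_succ_cons, List.sum_cons, Finset.sum_range_succ']
      simp only [List.getD_cons_succ, List.getD_cons_zero]
      rw [iht m (by simpa using hm)]
      omega

lemma rev_take_sum (d : List ℕ) (l : ℕ) (h : l ≤ d.length) :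
    (d.reverse.take l).sum = ∑ i ∈ Finset.Ico (d.length - l) d.length, d.getD i 0 := by
  have h1 : d.reverse.take l = (d.drop (d.length - l)).reverse := by
    have h2 : d.reverse = (d.drop (d.length - l)).reverse ++ (d.take (d.length - l)).reverse := by
      rw [← List.reverse_append, List.take_append_drop]
    rw [h2, List.take_left']
    rw [List.length_reverse, List.length_drop]
    omega
  rw [h1, List.sum_reverse]
  have h3 : (d.take (d.length - l)).sum + (d.drop (d.length - l)).sum = d.sum := by
    rw [← List.sum_append, List.take_append_drop]
  have h4 : (d.take (d.length - l)).sum = ∑ i ∈ Finset.range (d.length - l), d.getD i 0 :=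
    take_sum _ _ (by omega)
  have h5 : d.sum = ∑ i ∈ Finset.range d.length, d.getD i 0 := by
    have := take_sum d d.length le_rfl; rwa [List.take_length] at this
  have h6 : (∑ i ∈ Finset.range (d.length - l), d.getD i 0)
      + ∑ i ∈ Finset.Ico (d.length - l) d.length, d.getD i 0
      = ∑ i ∈ Finset.range d.length, d.getD i 0 := by
    rw [Finset.range_eq_Ico, Finset.range_eq_Ico]
    exact Finset.sum_Ico_consecutive _ (by omega) (by omega)
  omega

lemma getD_eq_default' (d : List ℕ) (i : ℕ) (h : d.length ≤ i) : d.getD i 0 = 0 :=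
  List.getD_eq_default _ _ h

lemma chord_bound : ∀ (k a b : ℕ) (S : Finset (ℕ × ℕ)), b - a ≤ k →
    (∀ e ∈ S, a ≤ e.1 ∧ e.1 + 2 ≤ e.2 ∧ e.2 ≤ b) →
    (∀ e ∈ S, ∀ f ∈ S, ¬(e.1 < f.1 ∧ f.1 < e.2 ∧ e.2 < f.2)) →
    S.card ≤ b - a - 1 := by
  intro k
  induction k with
  | zero =>
    intro a b S hk hE hN
    rcases S.eq_empty_or_nonempty with rfl | ⟨e, he⟩
    · simp
    · obtain ⟨h1, h2, h3⟩ := hE e he; omega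
  | succ k ih =>
    intro a b S hk hE hN
    rcases S.eq_empty_or_nonempty with rfl | ⟨e0, he0⟩
    · simp
    have hab : a + 2 ≤ b := by obtain ⟨h1, h2, h3⟩ := hE e0 he0; omega
    by_cases hA : ((S.filter fun e => e.1 = a)).Nonempty
    · -- there is an edge with left endpoint a; take minimal right endpoint c
      set A := S.filter fun e => e.1 = a with hAdef
      have hAim : (A.image Prod.snd).Nonempty := hA.image _
      set c := (A.image Prod.snd).min' hAim with hcdef
      obtain ⟨e1, he1, he1c⟩ := Finset.mem_image.mp ((A.image Prod.snd).min'_mem hAim)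
      have he1S : e1 ∈ S := (Finset.mem_filter.mp he1).1
      have he1a : e1.1 = a := (Finset.mem_filter.mp he1).2
      have hacS : (a, c) ∈ S := by
        have : e1 = (a, c) := Prod.ext he1a he1c
        rwa [this] at he1S
      have hcmin : ∀ e ∈ S, e.1 = a → c ≤ e.2 := by
        intro e he hea
        exact (A.image Prod.snd).min'_le _ (Finset.mem_image.mpr ⟨e, Finset.mem_filter.mpr ⟨he, hea⟩, rfl⟩)
      have hac2 : a + 2 ≤ c := by have := hE _ hacS; simpa using this.2.1
      have hcb : c ≤ b := by have := hE _ hacS; simpa using this.2.2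
      set S1 := S.filter fun e => a < e.1 ∧ e.2 ≤ c with hS1
      set S2 := S.filter fun e => (e.1 = a ∧ e ≠ (a, c)) ∨ c ≤ e.1 with hS2
      have hcover : S ⊆ insert (a, c) (S1 ∪ S2) := by
        intro e he
        rcases eq_or_ne e (a, c) with rfl | hne
        · exact Finset.mem_insert_self _ _
        · refine Finset.mem_insert_of_mem (Finset.mem_union.mpr ?_)
          have hEe := hE e he
          rcases eq_or_ne e.1 a with hea | hea
          · exact Or.inr (Finset.mem_filter.mpr ⟨he, Or.inl ⟨hea, hne⟩⟩)
          · have ha1 : a < e.1 := lt_of_le_of_ne hEe.1 (Ne.symm hea)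
            by_cases hc1 : c ≤ e.1
            · exact Or.inr (Finset.mem_filter.mpr ⟨he, Or.inr hc1⟩)
            · have := hN _ hacS e he
              simp only [not_and, not_lt] at this
              exact Or.inl (Finset.mem_filter.mpr ⟨he, ha1, this ha1 (by omega)⟩)
      have hcard1 : S1.card ≤ c - (a + 1) - 1 := by
        refine ih (a+1) c S1 (by omega) ?_ ?_
        · intro e he
          have h1 := (Finset.mem_filter.mp he).2
          have h2 := hE e (Finset.mem_filter.mp he).1
          omega
        · intro e he f hf
          exact hN e (Finset.mem_filter.mp he).1 f (Finset.mem_filter.mp hf).1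
      -- S2: remap left endpoint a to c-1
      have hS2x : ∀ e ∈ S2, e ∈ S ∧ ((e.1 = a ∧ c + 1 ≤ e.2) ∨ c ≤ e.1) := by
        intro e he
        have heS := (Finset.mem_filter.mp he).1
        refine ⟨heS, ?_⟩
        rcases (Finset.mem_filter.mp he).2 with ⟨hea, hne⟩ | hec
        · have h1 := hcmin e heS hea
          have h2 : e.2 ≠ c := fun h => hne (Prod.ext hea h)
          exact Or.inl ⟨hea, by omega⟩
        · exact Or.inr hec
      have hinj : Set.InjOn (fun e : ℕ × ℕ => (max (c-1) e.1, e.2)) S2 := by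
        intro e he f hf hef
        simp only [Prod.mk.injEq] at hef
        obtain ⟨hxe⟩ := hS2x e he
        obtain ⟨hxf⟩ := hS2x f hf
        have h3 : e.1 = f.1 := by omega
        exact Prod.ext h3 hef.2
      have hcard2 : S2.card ≤ b - (c - 1) - 1 := by
        rw [← Finset.card_image_of_injOn hinj]
        refine ih (c-1) b (S2.image fun e : ℕ × ℕ => (max (c-1) e.1, e.2)) (by omega) ?_ ?_
        · rintro p hp
          obtain ⟨e, he, rfl⟩ := Finset.mem_image.mp hp
          obtain ⟨heS, hx⟩ := hS2x e he
          have hEe := hE e heS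
          dsimp only
          omega
        · rintro p hp q hq ⟨h1, h2, h3⟩
          obtain ⟨e, he, rfl⟩ := Finset.mem_image.mp hp
          obtain ⟨f, hf, rfl⟩ := Finset.mem_image.mp hq
          obtain ⟨heS, hxe⟩ := hS2x e he
          obtain ⟨hfS, hxf⟩ := hS2x f hf
          dsimp only at h1 h2 h3
          rcases hxe with ⟨hea, he2⟩ | hec <;> rcases hxf with ⟨hfa, hf2⟩ | hfc
          · omega
          · exact hN e heS f hfS ⟨by omega, by omega, h3⟩
          · omega
          · exact hN e heS f hfS ⟨by omega, by omega, h3⟩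
      calc S.card ≤ (insert (a, c) (S1 ∪ S2)).card := Finset.card_le_card hcover
        _ ≤ (S1 ∪ S2).card + 1 := Finset.card_insert_le _ _
        _ ≤ (S1.card + S2.card) + 1 := by
              have := Finset.card_union_le S1 S2; omega
        _ ≤ b - a - 1 := by omega
    · -- no edge has left endpoint a
      have : ∀ e ∈ S, a + 1 ≤ e.1 := by
        intro e he
        have h1 := (hE e he).1
        rcases eq_or_ne e.1 a with h | h
        · exact absurd ⟨e, Finset.mem_filter.mpr ⟨he, h⟩⟩ hA
        · omega
      have := ih (a+1) b S (by omega) (fun e he => ⟨this e he, (hE e he).2⟩) hN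
      omega
def rrr (j x : ℕ) : ℕ := if x ≤ j then x else x + 1

lemma rrr_spec (j x : ℕ) : (x ≤ j ∧ rrr j x = x) ∨ (j < x ∧ rrr j x = x + 1) := by
  unfold rrr; split_ifs with h
  · exact Or.inl ⟨h, rfl⟩
  · exact Or.inr ⟨by omega, rfl⟩

lemma build : ∀ (n : ℕ) (d : List ℕ), d.length = n →
    (∑ i ∈ Finset.range n, d.getD i 0) = n →
    (∀ m, m ≤ n → m ≤ ∑ i ∈ Finset.range m, d.getD i 0) →
    ∃ T : Triangulation n, T.outList = d := by
  intro n
  induction n using Nat.strong_induction_on with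
  | _ n ih =>
  intro d hlen hsum hpre
  match n, ih, hlen, hsum, hpre with
  | 0, ih, hlen, hsum, hpre =>
    refine ⟨⟨∅, by simp, by simp, by simp⟩, ?_⟩
    have hd : d = [] := List.length_eq_zero_iff.mp hlen
    simp [Triangulation.outList, hd]
  | 1, ih, hlen, hsum, hpre =>
    obtain ⟨a, rfl⟩ := List.length_eq_one_iff.mp hlen
    simp [Finset.sum_range_one] at hsum
    refine ⟨⟨∅, by simp, by simp, by simp⟩, ?_⟩
    simp [Triangulation.outList, Triangulation.out, hsum, List.range_succ]
  | (m+2), ih, hlen, hsum, hpre =>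
    -- notation
    set D : ℕ → ℕ := fun i => d.getD i 0 with hD
    have hsum2 : ∑ i ∈ Finset.range (m+2), D i = m + 2 := hsum
    have hpre2 : ∀ t, t ≤ m + 2 → t ≤ ∑ i ∈ Finset.range t, D i := hpre
    have hD0 : ∀ i, m + 2 ≤ i → D i = 0 := by
      intro i hi
      simp only [hD]
      exact List.getD_eq_default _ _ (by omega)
    -- the largest index with positive degree
    have hKne : ((Finset.range (m+2)).filter fun i => D i ≠ 0).Nonempty := by
      by_contra h
      rw [Finset.not_nonempty_iff_eq_empty, Finset.filter_eq_empty_iff] at h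
      have h0 : ∑ i ∈ Finset.range (m+2), D i = 0 :=
        Finset.sum_eq_zero (fun i hi => by have := h hi; simpa using this)
      rw [h0] at hsum2
      omega
    obtain ⟨j, hjmem, hjub⟩ : ∃ j, j ∈ ((Finset.range (m+2)).filter fun i => D i ≠ 0) ∧
        ∀ i ∈ ((Finset.range (m+2)).filter fun i => D i ≠ 0), i ≤ j :=
      ⟨_, Finset.max'_mem _ hKne, fun i hi => Finset.le_max' _ i hi⟩
    have hjlt : j < m + 2 := Finset.mem_range.mp (Finset.mem_filter.mp hjmem).1
    have hjpos : 1 ≤ D j := Nat.one_le_iff_ne_zero.mpr (Finset.mem_filter.mp hjmem).2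
    have hjmax : ∀ i, j < i → D i = 0 := by
      intro i hi
      by_cases h2 : i < m + 2
      · by_contra h
        have h3 : i ∈ (Finset.range (m+2)).filter fun i => D i ≠ 0 :=
          Finset.mem_filter.mpr ⟨Finset.mem_range.mpr h2, h⟩
        have := hjub i h3
        omega
      · exact hD0 i (by omega)
    have hlast : D (m+1) ≤ 1 := by
      have h1 := hpre2 (m+1) (by omega)
      have h2 : ∑ i ∈ Finset.range (m+2), D i
          = (∑ i ∈ Finset.range (m+1), D i) + D (m+1) := Finset.sum_range_succ _ _
      rw [h2] at hsum2
      omega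
    -- the reduced degree function
    set D' : ℕ → ℕ := fun i => if i = j then D j - 1 else D i with hD'
    have hptD : ∀ t, j < t → ∀ i ∈ Finset.range t, D i = D' i + (if i = j then 1 else 0) := by
      intro t ht i _
      simp only [hD']
      split_ifs with h
      · rw [h]; omega
      · omega
    have hsum_shift : ∀ t, j < t → t ≤ m + 2 →
        (∑ i ∈ Finset.range t, D' i) + 1 = ∑ i ∈ Finset.range t, D i := by
      intro t ht htm
      rw [Finset.sum_congr rfl (hptD t ht), Finset.sum_add_distrib,
        Finset.sum_ite_eq' (Finset.range t) j (fun _ => 1), if_pos (Finset.mem_range.mpr ht)]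
    have htail : ∀ t, j < t → t ≤ m + 2 → ∑ i ∈ Finset.range t, D i = m + 2 := by
      intro t ht htm
      have h2 : ∑ i ∈ Finset.range (m+2), D i
          = ∑ i ∈ Finset.range t, D i + ∑ i ∈ Finset.Ico t (m+2), D i := by
        rw [Finset.range_eq_Ico, Finset.range_eq_Ico]
        exact (Finset.sum_Ico_consecutive _ (by omega) (by omega)).symm
      have h3 : ∑ i ∈ Finset.Ico t (m+2), D i = 0 :=
        Finset.sum_eq_zero (fun i hi => hjmax i (by have := Finset.mem_Ico.mp hi; omega))
      rw [h2, h3] at hsum2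
      omega
    have hsum' : ∑ i ∈ Finset.range (m+1), D' i = m + 1 := by
      by_cases hjm : j = m + 1
      · -- D (m+1) = 1, D' (m+1) = 0
        subst hjm
        have h1 : ∑ i ∈ Finset.range (m+2), D' i + 1 = m + 2 := by
          rw [hsum_shift (m+2) (by omega) (by omega)]; exact hsum2
        have h2 : ∑ i ∈ Finset.range (m+2), D' i
            = ∑ i ∈ Finset.range (m+1), D' i + D' (m+1) := Finset.sum_range_succ _ _
        have h3 : D' (m+1) = 0 := by
          simp only [hD', if_pos rfl]
          omega
        omega
      · have hjm1 : j < m + 1 := by omega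
        have h1 := hsum_shift (m+1) hjm1 (by omega)
        have h2 := htail (m+1) hjm1 (by omega)
        omega
    have hpre' : ∀ t, t ≤ m + 1 → t ≤ ∑ i ∈ Finset.range t, D' i := by
      intro t ht
      by_cases htj : t ≤ j
      · have heq : ∑ i ∈ Finset.range t, D' i = ∑ i ∈ Finset.range t, D i := by
          refine Finset.sum_congr rfl (fun i hi => ?_)
          have := Finset.mem_range.mp hi
          simp only [hD']
          rw [if_neg (by omega)]
        have := hpre2 t (by omega)
        omega
      · have h1 := hsum_shift t (by omega) (by omega)
        have h2 := htail t (by omega) (by omega)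
        omega
    -- the reduced list
    set d' : List ℕ := (List.range (m+1)).map D' with hd'
    have hd'len : d'.length = m + 1 := by simp [hd']
    have hd'get : ∀ i, i < m + 1 → d'.getD i 0 = D' i := by
      intro i hi
      simp only [hd']
      exact getD_map_range _ _ _ hi
    have hconv : ∀ t, t ≤ m + 1 → ∑ i ∈ Finset.range t, d'.getD i 0 = ∑ i ∈ Finset.range t, D' i :=
      fun t ht => Finset.sum_congr rfl
        (fun i hi => hd'get i (by have := Finset.mem_range.mp hi; omega))
    obtain ⟨T', hT'⟩ := ih (m+1) (by omega) d' hd'len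
      (by rw [hconv (m+1) le_rfl]; exact hsum')
      (fun t ht => by rw [hconv t ht]; exact hpre' t ht)
    -- facts about T'
    have hout' : ∀ i, i < m + 1 → T'.out i = D' i := by
      intro i hi
      have h1 := congrArg (fun L => L.getD i 0) hT'
      simp only [Triangulation.outList] at h1
      rw [getD_map_range _ _ _ hi, hd'get i hi] at h1
      exact h1
    have hedge : ∀ e ∈ T'.diag, e.1 ≤ j := by
      intro e he
      by_contra h
      push_neg at h
      have h2 := T'.isDiag e he
      have h3 : e.1 < m + 1 := by omega
      have h4 := hout' e.1 h3
      have h5 : D' e.1 = 0 := by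
        simp only [hD']
        rw [if_neg (by omega)]
        exact hjmax e.1 h
      have h6 : 0 < (T'.diag.filter fun f => f.1 = e.1).card :=
        Finset.card_pos.mpr ⟨e, Finset.mem_filter.mpr ⟨he, rfl⟩⟩
      simp only [Triangulation.out] at h4
      omega
    -- build the new triangulation
    set r : ℕ × ℕ → ℕ × ℕ := fun e => (rrr j e.1, rrr j e.2) with hr
    have hrinj : Function.Injective r := by
      intro e f hef
      simp only [hr, Prod.mk.injEq] at hef
      have s1 := rrr_spec j e.1; have s2 := rrr_spec j f.1
      have s3 := rrr_spec j e.2; have s4 := rrr_spec j f.2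
      have : e.1 = f.1 := by omega
      have : e.2 = f.2 := by omega
      exact Prod.ext ‹e.1 = f.1› ‹e.2 = f.2›
    have hnotmem : (j, j+2) ∉ T'.diag.image r := by
      intro h
      obtain ⟨e, he, heq⟩ := Finset.mem_image.mp h
      simp only [hr, Prod.mk.injEq] at heq
      have s1 := rrr_spec j e.1
      have s2 := rrr_spec j e.2
      have h2 := T'.isDiag e he
      omega
    refine ⟨⟨insert (j, j+2) (T'.diag.image r), ?_, ?_, ?_⟩, ?_⟩
    · -- isDiag
      intro e he
      rcases Finset.mem_insert.mp he with rfl | he'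
      · refine ⟨by omega, by omega, by omega⟩
      · obtain ⟨f, hf, rfl⟩ := Finset.mem_image.mp he'
        have h2 := T'.isDiag f hf
        simp only [hr]
        have s1 := rrr_spec j f.1
        have s2 := rrr_spec j f.2
        refine ⟨by omega, by omega, by omega⟩
    · -- noncross
      intro e he f hf
      rcases Finset.mem_insert.mp he with rfl | he' <;>
        rcases Finset.mem_insert.mp hf with hf2 | hf'
      · rw [hf2]; rintro ⟨h1, h2, h3⟩; simp at h1
      · obtain ⟨g, hg, rfl⟩ := Finset.mem_image.mp hf'
        rintro ⟨h1, h2, h3⟩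
        simp only [hr] at h1 h2 h3
        have s1 := rrr_spec j g.1
        omega
      · rw [hf2]
        obtain ⟨g, hg, rfl⟩ := Finset.mem_image.mp he'
        rintro ⟨h1, h2, h3⟩
        simp only [hr] at h1 h2 h3
        have s2 := rrr_spec j g.2
        omega
      · obtain ⟨g, hg, rfl⟩ := Finset.mem_image.mp he'
        obtain ⟨g', hg', rfl⟩ := Finset.mem_image.mp hf'
        rintro ⟨h1, h2, h3⟩
        simp only [hr] at h1 h2 h3
        have s1 := rrr_spec j g.1
        have s2 := rrr_spec j g.2
        have s3 := rrr_spec j g'.1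
        have s4 := rrr_spec j g'.2
        exact T'.noncross g hg g' hg' ⟨by omega, by omega, by omega⟩
    · -- card
      rw [Finset.card_insert_of_notMem hnotmem, Finset.card_image_of_injective _ hrinj,
        T'.card_diag]
      omega
    · -- outList = d
      have key : ∀ i, i < m + 2 →
          ((insert (j, j+2) (T'.diag.image r)).filter fun e => e.1 = i).card
            + (if i = 0 then 1 else 0) = D i := by
        intro i hi
        have hcard : ((T'.diag.image r).filter fun e => e.1 = i).card
            = (T'.diag.filter fun e => rrr j e.1 = i).card := by
          rw [Finset.filter_image, Finset.card_image_of_injective _ hrinj]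
        have hsplit : ((insert (j, j+2) (T'.diag.image r)).filter fun e => e.1 = i).card
            = (T'.diag.filter fun e => rrr j e.1 = i).card + (if j = i then 1 else 0) := by
          rw [Finset.filter_insert]
          by_cases h : j = i
          · rw [if_pos (show ((j, j+2) : ℕ × ℕ).1 = i from h), if_pos h,
              Finset.card_insert_of_notMem (fun hmem => hnotmem (Finset.mem_filter.mp hmem).1),
              hcard]
          · rw [if_neg (show ¬((j, j+2) : ℕ × ℕ).1 = i from h), if_neg h, hcard]
            omega
        rw [hsplit]
        rcases Nat.lt_trichotomy i j with hij | hij | hij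
        · -- i < j
          rw [if_neg (by omega)]
          have hfe : (T'.diag.filter fun e => rrr j e.1 = i)
              = T'.diag.filter fun e => e.1 = i :=
            Finset.filter_congr (fun e _ => by have s1 := rrr_spec j e.1; constructor <;> omega)
          rw [hfe]
          have h4 := hout' i (by omega)
          simp only [Triangulation.out] at h4
          have h5 : D' i = D i := by simp only [hD']; rw [if_neg (by omega)]
          omega
        · -- i = j
          rw [← hij]
          rw [if_pos rfl]
          have hfe : (T'.diag.filter fun e => rrr i e.1 = i)
              = T'.diag.filter fun e => e.1 = i :=
            Finset.filter_congr (fun e _ => by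
              have s1 := rrr_spec i e.1; constructor <;> omega)
          rw [hfe]
          have hip : 1 ≤ D i := by rw [hij]; exact hjpos
          by_cases hjm : i = m + 1
          · have hempty : (T'.diag.filter fun e => e.1 = i) = ∅ := by
              rw [Finset.filter_eq_empty_iff]
              intro e he
              have h2 := T'.isDiag e he
              omega
            rw [hempty]
            have hlast' : D i ≤ 1 := by rw [hjm]; exact hlast
            simp only [Finset.card_empty]
            rw [if_neg (by omega)]
            omega
          · have h4 := hout' i (by omega)
            simp only [Triangulation.out] at h4
            have h5 : D' i = D i - 1 := by
              simp only [hD']; rw [if_pos hij, ← hij]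
            omega
        · -- j < i
          rw [if_neg (by omega)]
          have hempty : (T'.diag.filter fun e => rrr j e.1 = i) = ∅ := by
            rw [Finset.filter_eq_empty_iff]
            intro e he
            have h2 := hedge e he
            have s1 := rrr_spec j e.1
            omega
          rw [hempty]
          have h5 := hjmax i hij
          simp only [Finset.card_empty]
          rw [if_neg (by omega)]
          omega
      -- conclude list equality
      simp only [Triangulation.outList]
      refine List.ext_getElem (by simpa using hlen.symm) ?_
      intro i h1 h2
      simp only [List.getElem_map, List.getElem_range]
      have h3 : i < m + 2 := by simpa using h1
      have h4 := key i h3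
      simp only [Triangulation.out]
      have h5 : d.getD i 0 = d[i] := List.getD_eq_getElem d 0 h2
      simp only [hD] at h4
      omega

/-- A sequence `(d_1,…,d_n)` is the outdegree sequence of some triangulation of
a convex `(n+2)`-gon iff its entries sum to `n` and every suffix of length `l`
has sum at most `l`. -/
theorem stmt6 (n : ℕ) (d : List ℕ) (hlen : d.length = n) :
    (∃ T : Triangulation n, T.outList = d) ↔
      (d.sum = n ∧ ∀ l, l ≤ n → (d.reverse.take l).sum ≤ l) := by
  constructor
  · rintro ⟨T, rfl⟩
    have hfst : ∀ e ∈ T.diag, e.1 ∈ Finset.range n := by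
      intro e he
      have := T.isDiag e he
      exact Finset.mem_range.mpr (by omega)
    have hLlen : T.outList.length = n := by simp [Triangulation.outList]
    have hgetD : ∀ i, i < n → T.outList.getD i 0 = T.out i := by
      intro i hi
      simp only [Triangulation.outList]
      exact getD_map_range _ _ _ hi
    have hsum_out : ∑ i ∈ Finset.range n, T.out i = n := by
      simp only [Triangulation.out]
      rw [Finset.sum_add_distrib]
      have h1 : T.diag.card = ∑ i ∈ Finset.range n, (T.diag.filter fun e => e.1 = i).card :=
        Finset.card_eq_sum_card_fiberwise hfst
      have h2 : ∑ i ∈ Finset.range n, (if i = 0 then (1:ℕ) else 0)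
          = if (0:ℕ) ∈ Finset.range n then 1 else 0 := Finset.sum_ite_eq' _ _ _
      rw [← h1, h2]
      have h3 := T.card_diag
      rcases Nat.eq_zero_or_pos n with rfl | hn
      · have h4 : T.diag.card = 0 := by omega
        simp [Finset.card_eq_zero.mp h4]
      · rw [if_pos (Finset.mem_range.mpr hn)]
        omega
    constructor
    · rw [Triangulation.outList, sum_map_range]
      exact hsum_out
    · intro l hl
      rw [rev_take_sum _ _ (by omega), hLlen]
      have hconv : ∑ i ∈ Finset.Ico (n - l) n, T.outList.getD i 0
          = ∑ i ∈ Finset.Ico (n - l) n, T.out i :=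
        Finset.sum_congr rfl (fun i hi => hgetD i (Finset.mem_Ico.mp hi).2)
      rw [hconv]
      simp only [Triangulation.out]
      rw [Finset.sum_add_distrib]
      -- the fiberwise count of edges with left endpoint ≥ n - l
      have hfst2 : ∀ e ∈ T.diag.filter (fun e => n - l ≤ e.1), e.1 ∈ Finset.Ico (n - l) n := by
        intro e he
        have h1 := Finset.mem_filter.mp he
        have h2 := T.isDiag e h1.1
        exact Finset.mem_Ico.mpr ⟨h1.2, by omega⟩
      have hb1 : (T.diag.filter fun e => n - l ≤ e.1).card
          = ∑ i ∈ Finset.Ico (n - l) n, (T.diag.filter fun e => e.1 = i).card := by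
        rw [Finset.card_eq_sum_card_fiberwise hfst2]
        refine Finset.sum_congr rfl (fun i hi => ?_)
        rw [Finset.filter_filter]
        refine congrArg Finset.card ?_
        refine Finset.filter_congr (fun e he => ?_)
        have h4 := (Finset.mem_Ico.mp hi).1
        constructor
        · exact fun h => h.2
        · exact fun h => ⟨by omega, h⟩
      have hb2 : (T.diag.filter fun e => n - l ≤ e.1).card ≤ (n + 1) - (n - l) - 1 := by
        refine chord_bound ((n+1) - (n-l)) (n - l) (n + 1) _ le_rfl ?_ ?_
        · intro e he
          have h1 := Finset.mem_filter.mp he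
          have h2 := T.isDiag e h1.1
          exact ⟨h1.2, h2.1, h2.2.1⟩
        · intro e he f hf
          exact T.noncross e (Finset.mem_filter.mp he).1 f (Finset.mem_filter.mp hf).1
      have hb3 : (T.diag.filter fun e => n - l ≤ e.1).card ≤ n - 1 := by
        have := Finset.card_le_card (Finset.filter_subset (fun e => n - l ≤ e.1) T.diag)
        rw [T.card_diag] at this
        exact this
      have hε : ∑ i ∈ Finset.Ico (n - l) n, (if i = 0 then (1:ℕ) else 0)
          = if (0:ℕ) ∈ Finset.Ico (n - l) n then 1 else 0 := Finset.sum_ite_eq' _ _ _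
      rw [← hb1, hε]
      by_cases h0 : (0:ℕ) ∈ Finset.Ico (n - l) n
      · have h1 := Finset.mem_Ico.mp h0
        rw [if_pos h0]
        omega
      · have h1 : ¬(n - l ≤ 0 ∧ 0 < n) := fun hh => h0 (Finset.mem_Ico.mpr hh)
        rw [if_neg h0]
        omega
  · rintro ⟨hsum, hsuf⟩
    have hS : ∑ i ∈ Finset.range n, d.getD i 0 = d.sum := by
      have := take_sum d d.length le_rfl
      rw [List.take_length] at this
      rw [hlen] at this
      exact this.symm
    have hpre : ∀ t, t ≤ n → t ≤ ∑ i ∈ Finset.range t, d.getD i 0 := by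
      intro t ht
      have h1 := hsuf (n - t) (by omega)
      rw [rev_take_sum _ _ (by omega), hlen] at h1
      have h2 : n - (n - t) = t := by omega
      rw [h2] at h1
      have h3 : (∑ i ∈ Finset.range t, d.getD i 0)
          + ∑ i ∈ Finset.Ico t n, d.getD i 0 = ∑ i ∈ Finset.range n, d.getD i 0 := by
        rw [Finset.range_eq_Ico, Finset.range_eq_Ico]
        exact Finset.sum_Ico_consecutive _ (by omega) (by omega)
      omega
    exact build n d hlen (by rw [hS]; exact hsum) hpre
end

section
/- Two triangulations of a convex (n+2)-gon with the same outdegree sequence (d_1,...,d_n) are equal. -/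

lemma chordBound : ∀ (N : ℕ) (V : Finset ℕ) (S : Finset (ℕ × ℕ)),
    V.card ≤ N →
    (∀ e ∈ S, e.1 ∈ V ∧ e.2 ∈ V) →
    (∀ e ∈ S, ∃ v ∈ V, e.1 < v ∧ v < e.2) →
    (∀ e ∈ S, (∃ v ∈ V, v < e.1) ∨ (∃ v ∈ V, e.2 < v)) →
    (∀ e ∈ S, ∀ f ∈ S, ¬(e.1 < f.1 ∧ f.1 < e.2 ∧ e.2 < f.2)) →
    S.card ≤ V.card - 3 := by
  intro N
  induction N with
  | zero =>
    intro V S hV h1 h2 h3 h4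
    have hS : S = ∅ := by
      rw [Finset.eq_empty_iff_forall_notMem]
      intro e he
      obtain ⟨v, hv, -⟩ := h2 e he
      have := Finset.card_pos.2 (⟨v, hv⟩ : V.Nonempty)
      omega
    simp [hS]
  | succ N ih =>
    intro V S hV h1 h2 h3 h4
    rcases S.eq_empty_or_nonempty with rfl | hS
    · simp
    classical
    let int : ℕ × ℕ → Finset ℕ := fun e => V.filter (fun v => e.1 < v ∧ v < e.2)
    have hmemint : ∀ e v, v ∈ int e ↔ v ∈ V ∧ e.1 < v ∧ v < e.2 := by
      intro e v; simp [int]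
    obtain ⟨e0, he0, hmin⟩ := S.exists_min_image (fun e => (int e).card) hS
    have hi0 : (int e0).Nonempty := by
      obtain ⟨v, hv, hlt⟩ := h2 e0 he0
      exact ⟨v, (hmemint e0 v).2 ⟨hv, hlt⟩⟩
    obtain ⟨v0, hv0⟩ := hi0
    obtain ⟨hV0, hv0l, hv0r⟩ := (hmemint e0 v0).1 hv0
    have hpos : 1 ≤ (int e0).card := Finset.card_pos.2 ⟨v0, hv0⟩
    have huntouched : ∀ f ∈ S, f.1 ≠ v0 ∧ f.2 ≠ v0 := by
      intro f hf
      constructor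
      · intro h
        by_cases hf2 : e0.2 < f.2
        · exact h4 e0 he0 f hf ⟨h ▸ hv0l, h ▸ hv0r, hf2⟩
        · push_neg at hf2
          have hsub : int f ⊆ (int e0).erase v0 := by
            intro v hv
            obtain ⟨hvV, hv1, hv2⟩ := (hmemint f v).1 hv
            refine Finset.mem_erase.2 ⟨by omega, (hmemint e0 v).2 ⟨hvV, by omega, by omega⟩⟩
          have hle := Finset.card_le_card hsub
          rw [Finset.card_erase_of_mem hv0] at hle
          have hm := hmin f hf
          omega
      · intro h
        by_cases hf1 : f.1 < e0.1
        · exact h4 f hf e0 he0 ⟨hf1, h ▸ hv0l, h ▸ hv0r⟩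
        · push_neg at hf1
          have hsub : int f ⊆ (int e0).erase v0 := by
            intro v hv
            obtain ⟨hvV, hv1, hv2⟩ := (hmemint f v).1 hv
            refine Finset.mem_erase.2 ⟨by omega, (hmemint e0 v).2 ⟨hvV, by omega, by omega⟩⟩
          have hle := Finset.card_le_card hsub
          rw [Finset.card_erase_of_mem hv0] at hle
          have hm := hmin f hf
          omega
    have hVe : (V.erase v0).card = V.card - 1 := Finset.card_erase_of_mem hV0
    have h1e : ∀ f ∈ S, f.1 ∈ V.erase v0 ∧ f.2 ∈ V.erase v0 := by
      intro f hf
      obtain ⟨u1, u2⟩ := huntouched f hf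
      exact ⟨Finset.mem_erase.2 ⟨u1, (h1 f hf).1⟩, Finset.mem_erase.2 ⟨u2, (h1 f hf).2⟩⟩
    have h3e : ∀ f ∈ S, (∃ v ∈ V.erase v0, v < f.1) ∨ (∃ v ∈ V.erase v0, f.2 < v) := by
      intro f hf
      rcases h3 f hf with ⟨v, hv, hlt⟩ | ⟨v, hv, hlt⟩
      · by_cases hvv : v = v0
        · subst hvv
          exact Or.inl ⟨e0.1, Finset.mem_erase.2 ⟨by omega, (h1 e0 he0).1⟩, by omega⟩
        · exact Or.inl ⟨v, Finset.mem_erase.2 ⟨hvv, hv⟩, hlt⟩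
      · by_cases hvv : v = v0
        · subst hvv
          exact Or.inr ⟨e0.2, Finset.mem_erase.2 ⟨by omega, (h1 e0 he0).2⟩, by omega⟩
        · exact Or.inr ⟨v, Finset.mem_erase.2 ⟨hvv, hv⟩, hlt⟩
    by_cases hg : 2 ≤ (int e0).card
    · have h2e : ∀ f ∈ S, ∃ v ∈ V.erase v0, f.1 < v ∧ v < f.2 := by
        intro f hf
        have hcf : 1 < (int f).card := lt_of_lt_of_le hg (hmin f hf)
        obtain ⟨v, hv, hne⟩ := Finset.exists_mem_ne hcf v0
        obtain ⟨hvV, hv1, hv2⟩ := (hmemint f v).1 hv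
        exact ⟨v, Finset.mem_erase.2 ⟨hne, hvV⟩, hv1, hv2⟩
      have := ih (V.erase v0) S (by omega) h1e h2e h3e h4
      omega
    · push_neg at hg
      have hcard1 : (int e0).card = 1 := by omega
      have hsing : ∀ v ∈ int e0, v = v0 := by
        intro v hv
        by_contra hne
        have : 1 < (int e0).card :=
          Finset.one_lt_card.2 ⟨v, hv, v0, hv0, hne⟩
        omega
      have hV4 : 4 ≤ V.card := by
        have key : ∀ w ∈ V, w ≠ e0.1 → w ≠ v0 → w ≠ e0.2 → 4 ≤ V.card := by
          intro w hw hw1 hw2 hw3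
          have hsub : ({w, e0.1, v0, e0.2} : Finset ℕ) ⊆ V := by
            intro x hx
            simp only [Finset.mem_insert, Finset.mem_singleton] at hx
            rcases hx with rfl | rfl | rfl | rfl
            · exact hw
            · exact (h1 e0 he0).1
            · exact hV0
            · exact (h1 e0 he0).2
          have hc : ({w, e0.1, v0, e0.2} : Finset ℕ).card = 4 := by
            rw [Finset.card_insert_of_notMem (by simp [hw1, hw2, hw3]),
              Finset.card_insert_of_notMem (by simp; omega),
              Finset.card_insert_of_notMem (by simp; omega), Finset.card_singleton]
          have := Finset.card_le_card hsub
          omega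
        rcases h3 e0 he0 with ⟨w, hw, hlt⟩ | ⟨w, hw, hlt⟩
        · exact key w hw (by omega) (by omega) (by omega)
        · exact key w hw (by omega) (by omega) (by omega)
      set S' := S.erase e0 with hS'
      have h2e : ∀ f ∈ S', ∃ v ∈ V.erase v0, f.1 < v ∧ v < f.2 := by
        intro f hf
        have hfS : f ∈ S := Finset.mem_of_mem_erase hf
        by_contra hcon
        push_neg at hcon
        have hintf : ∀ v ∈ int f, v = v0 := by
          intro v hv
          obtain ⟨hvV, hv1, hv2⟩ := (hmemint f v).1 hv
          by_contra hne
          exact absurd hv2 (by have := hcon v (Finset.mem_erase.2 ⟨hne, hvV⟩) hv1; omega)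
        obtain ⟨v, hvm, hvlt⟩ := h2 f hfS
        have hveq : v = v0 := hintf v ((hmemint f v).2 ⟨hvm, hvlt⟩)
        subst hveq
        have hf1 : f.1 = e0.1 := by
          rcases lt_trichotomy f.1 e0.1 with hc | hc | hc
          · have := hintf e0.1 ((hmemint f e0.1).2 ⟨(h1 e0 he0).1, hc, by omega⟩)
            omega
          · exact hc
          · have := hsing f.1 ((hmemint e0 f.1).2 ⟨(h1 f hfS).1, hc, by omega⟩)
            omega
        have hf2 : f.2 = e0.2 := by
          rcases lt_trichotomy f.2 e0.2 with hc | hc | hc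
          · have := hsing f.2 ((hmemint e0 f.2).2 ⟨(h1 f hfS).2, by omega, hc⟩)
            omega
          · exact hc
          · have := hintf e0.2 ((hmemint f e0.2).2 ⟨(h1 e0 he0).2, by omega, hc⟩)
            omega
        have : f = e0 := Prod.ext hf1 hf2
        rw [this] at hf
        exact (Finset.notMem_erase e0 S) hf
      have h1e' : ∀ f ∈ S', f.1 ∈ V.erase v0 ∧ f.2 ∈ V.erase v0 :=
        fun f hf => h1e f (Finset.mem_of_mem_erase hf)
      have h3e' : ∀ f ∈ S', (∃ v ∈ V.erase v0, v < f.1) ∨ (∃ v ∈ V.erase v0, f.2 < v) :=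
        fun f hf => h3e f (Finset.mem_of_mem_erase hf)
      have h4e : ∀ e ∈ S', ∀ f ∈ S', ¬(e.1 < f.1 ∧ f.1 < e.2 ∧ e.2 < f.2) :=
        fun e he f hf => h4 e (Finset.mem_of_mem_erase he) f (Finset.mem_of_mem_erase hf)
      have hrec := ih (V.erase v0) S' (by omega) h1e' h2e h3e' h4e
      have hcS : S'.card = S.card - 1 := Finset.card_erase_of_mem he0
      have hSpos : 1 ≤ S.card := Finset.card_pos.2 ⟨e0, he0⟩
      omega

namespace Stmt7

variable {n : ℕ} (T : Triangulation n)

def DD : Finset (ℕ × ℕ) := insert (0, n + 1) T.diag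

lemma special_mem : ((0:ℕ), n+1) ∈ DD T := Finset.mem_insert_self _ _

lemma special_not_diag : ((0:ℕ), n+1) ∉ T.diag := by
  intro h
  exact (T.isDiag _ h).2.2 ⟨rfl, rfl⟩

lemma mem_DD {e : ℕ × ℕ} : e ∈ DD T ↔ e = ((0:ℕ), n+1) ∨ e ∈ T.diag := by
  simp [DD]

lemma DD_card (hn : 1 ≤ n) : (DD T).card = n := by
  rw [DD, Finset.card_insert_of_notMem (special_not_diag T), T.card_diag]
  omega

lemma DD_lt {e : ℕ × ℕ} (hn : 1 ≤ n) (he : e ∈ DD T) : e.1 + 2 ≤ e.2 ∧ e.2 ≤ n + 1 := by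
  rcases (mem_DD T).1 he with rfl | hd
  · simp; omega
  · exact ⟨(T.isDiag _ hd).1, (T.isDiag _ hd).2.1⟩

lemma DD_noncross (hn : 1 ≤ n) {e f : ℕ × ℕ} (he : e ∈ DD T) (hf : f ∈ DD T) :
    ¬(e.1 < f.1 ∧ f.1 < e.2 ∧ e.2 < f.2) := by
  rcases (mem_DD T).1 he with rfl | hde
  · rcases (mem_DD T).1 hf with rfl | hdf
    · simp
    · intro ⟨h1, h2, h3⟩
      have := (T.isDiag _ hdf).2.1
      simp at h3
      omega
  · rcases (mem_DD T).1 hf with rfl | hdf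
    · intro ⟨h1, h2, h3⟩
      simp at h1
    · exact T.noncross e hde f hdf

lemma out_eq (v : ℕ) : T.out v = ((DD T).filter (fun e => e.1 = v)).card := by
  rw [Triangulation.out, DD, Finset.filter_insert]
  by_cases h : v = 0
  · subst h
    rw [if_pos rfl, if_pos rfl,
      Finset.card_insert_of_notMem (fun hc => special_not_diag T (Finset.mem_of_mem_filter _ hc))]
  · rw [if_neg h, if_neg (by simpa using fun hc => h hc.symm)]
    omega

/-- Lemma D : the inside count. -/
lemma lemD (hn : 1 ≤ n) {a b : ℕ} (hab : (a, b) ∈ DD T) :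
    ((DD T).filter (fun e => a ≤ e.1 ∧ e.2 ≤ b)).card + (a + 1) = b := by
  classical
  have hab2 := DD_lt T hn hab
  simp only at hab2
  set D := DD T with hD
  set A := D.filter (fun e => a ≤ e.1 ∧ e.2 ≤ b) with hA
  have hmemA : (a, b) ∈ A := Finset.mem_filter.2 ⟨hab, le_refl _, le_refl _⟩
  set A' := A.erase (a, b) with hA'
  have hA'fact : ∀ e ∈ A', e ∈ T.diag ∧ a ≤ e.1 ∧ e.2 ≤ b ∧ e ≠ (a, b) := by
    intro e he
    have hne := Finset.ne_of_mem_erase he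
    have heA := Finset.mem_filter.1 (Finset.mem_of_mem_erase he)
    have heD := heA.1
    rcases (mem_DD T).1 heD with rfl | hd
    · exfalso
      have : a = 0 ∧ b = n + 1 := by
        obtain ⟨h1, h2⟩ := heA.2
        simp at h1 h2
        omega
      exact hne (by simp [this.1, this.2])
    · exact ⟨hd, heA.2.1, heA.2.2, hne⟩
  have hA'card : A'.card ≤ (b + 1 - a) - 3 := by
    have := chordBound (b + 1 - a) (Finset.Icc a b) A' (by rw [Nat.card_Icc]) ?_ ?_ ?_ ?_
    · rwa [Nat.card_Icc] at this
    · intro e he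
      obtain ⟨hd, h1, h2, _⟩ := hA'fact e he
      have h3 := (T.isDiag _ hd).1
      exact ⟨Finset.mem_Icc.2 ⟨h1, by omega⟩, Finset.mem_Icc.2 ⟨by omega, h2⟩⟩
    · intro e he
      obtain ⟨hd, h1, h2, _⟩ := hA'fact e he
      have h3 := (T.isDiag _ hd).1
      exact ⟨e.1 + 1, Finset.mem_Icc.2 ⟨by omega, by omega⟩, by omega, by omega⟩
    · intro e he
      obtain ⟨hd, h1, h2, hne⟩ := hA'fact e he
      have h3 := (T.isDiag _ hd).1
      rcases Nat.lt_or_ge a e.1 with hc | hc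
      · exact Or.inl ⟨a, Finset.mem_Icc.2 ⟨le_refl _, by omega⟩, hc⟩
      · have he1 : e.1 = a := by omega
        have he2 : e.2 ≠ b := by
          intro hc2
          exact hne (Prod.ext he1 hc2)
        exact Or.inr ⟨b, Finset.mem_Icc.2 ⟨by omega, le_refl _⟩, by omega⟩
    · intro e he f hf
      exact T.noncross e (hA'fact e he).1 f (hA'fact f hf).1
  set B := D.filter (fun e => ¬(a ≤ e.1 ∧ e.2 ≤ b)) with hB
  have hABcard : A.card + B.card = n := by
    rw [hA, hB, Finset.card_filter_add_card_filter_not, hD, DD_card T hn]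
  have hAcard : A.card = A'.card + 1 := by
    rw [hA', Finset.card_erase_of_mem hmemA]
    have := Finset.card_pos.2 ⟨(a, b), hmemA⟩
    omega
  by_cases hsp : a = 0 ∧ b = n + 1
  · obtain ⟨rfl, rfl⟩ := hsp
    have hBempty : B = ∅ := by
      rw [Finset.eq_empty_iff_forall_notMem]
      intro e he
      have he' := Finset.mem_filter.1 he
      have := DD_lt T hn he'.1
      exact he'.2 ⟨Nat.zero_le _, this.2⟩
    rw [hBempty] at hABcard
    simp at hABcard
    omega
  · have hspB : ((0:ℕ), n + 1) ∈ B := by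
      refine Finset.mem_filter.2 ⟨special_mem T, ?_⟩
      simp only
      intro ⟨h1, h2⟩
      simp at h1 h2
      exact hsp ⟨by omega, by omega⟩
    set B' := B.erase ((0:ℕ), n + 1) with hB'
    have hB'fact : ∀ e ∈ B', e ∈ T.diag ∧ ¬(a ≤ e.1 ∧ e.2 ≤ b) := by
      intro e he
      have hne := Finset.ne_of_mem_erase he
      have heB := Finset.mem_filter.1 (Finset.mem_of_mem_erase he)
      rcases (mem_DD T).1 heB.1 with rfl | hd
      · exact absurd rfl hne
      · exact ⟨hd, heB.2⟩
    have hends : ∀ e ∈ B', (e.1 ≤ a ∨ b ≤ e.1) ∧ (e.2 ≤ a ∨ b ≤ e.2) := by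
      intro e he
      obtain ⟨hd, hnp⟩ := hB'fact e he
      have heD : e ∈ D := (Finset.mem_filter.1 (Finset.mem_of_mem_erase he)).1
      have hlt := DD_lt T hn heD
      constructor
      · by_contra hc
        push_neg at hc
        by_cases h2 : b < e.2
        · exact DD_noncross T hn hab heD ⟨hc.1, hc.2, h2⟩
        · exact hnp ⟨by omega, by omega⟩
      · by_contra hc
        push_neg at hc
        by_cases h1 : e.1 < a
        · exact DD_noncross T hn heD hab ⟨h1, hc.1, hc.2⟩
        · exact hnp ⟨by omega, by omega⟩
    have hdisj : Disjoint (Finset.Icc 0 a) (Finset.Icc b (n+1)) := by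
      rw [Finset.disjoint_left]
      intro x hx hx'
      have h1 := Finset.mem_Icc.1 hx
      have h2 := Finset.mem_Icc.1 hx'
      omega
    have hVcard : (Finset.Icc 0 a ∪ Finset.Icc b (n+1)).card = (a+1) + (n+2-b) := by
      rw [Finset.card_union_of_disjoint hdisj, Nat.card_Icc, Nat.card_Icc]
      omega
    have hB'card : B'.card ≤ (a+1) + (n+2-b) - 3 := by
      have := chordBound ((a+1) + (n+2-b)) (Finset.Icc 0 a ∪ Finset.Icc b (n+1)) B'
        (by rw [hVcard]) ?_ ?_ ?_ ?_
      · rwa [hVcard] at this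
      · intro e he
        obtain ⟨hd, hnp⟩ := hB'fact e he
        have hlt := (T.isDiag _ hd).1
        have hlt2 := (T.isDiag _ hd).2.1
        obtain ⟨h1, h2⟩ := hends e he
        constructor
        · rcases h1 with h1 | h1
          · exact Finset.mem_union_left _ (Finset.mem_Icc.2 ⟨by omega, h1⟩)
          · exact Finset.mem_union_right _ (Finset.mem_Icc.2 ⟨h1, by omega⟩)
        · rcases h2 with h2 | h2
          · exact Finset.mem_union_left _ (Finset.mem_Icc.2 ⟨by omega, h2⟩)
          · exact Finset.mem_union_right _ (Finset.mem_Icc.2 ⟨h2, by omega⟩)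
      · intro e he
        obtain ⟨hd, hnp⟩ := hB'fact e he
        have hlt := (T.isDiag _ hd).1
        have hlt2 := (T.isDiag _ hd).2.1
        obtain ⟨h1, h2⟩ := hends e he
        rcases h2 with h2 | h2
        · -- e.2 ≤ a, witness e.1 + 1 in Icc 0 a
          exact ⟨e.1 + 1, Finset.mem_union_left _ (Finset.mem_Icc.2 ⟨by omega, by omega⟩),
            by omega, by omega⟩
        · rcases h1 with h1 | h1
          · -- e.1 ≤ a ≤ ? , b ≤ e.2
            rcases Nat.lt_or_ge e.1 a with hc | hc
            · exact ⟨a, Finset.mem_union_left _ (Finset.mem_Icc.2 ⟨Nat.zero_le _, le_refl _⟩),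
                hc, by omega⟩
            · -- e.1 = a, so e.2 > b (else in A)
              have he1 : e.1 = a := by omega
              have he2 : b < e.2 := by
                rcases Nat.lt_or_ge b e.2 with h | h
                · exact h
                · exact absurd ⟨by omega, by omega⟩ hnp
              exact ⟨b, Finset.mem_union_right _ (Finset.mem_Icc.2 ⟨le_refl _, by omega⟩),
                by omega, he2⟩
          · -- b ≤ e.1, witness e.1 + 1 in Icc b (n+1)
            exact ⟨e.1 + 1, Finset.mem_union_right _ (Finset.mem_Icc.2 ⟨by omega, by omega⟩),
              by omega, by omega⟩
      · intro e he
        obtain ⟨hd, hnp⟩ := hB'fact e he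
        have hlt2 := (T.isDiag _ hd).2.1
        have hne0 := (T.isDiag _ hd).2.2
        rcases Nat.eq_zero_or_pos e.1 with h0 | h0
        · have : e.2 < n + 1 := by
            rcases Nat.lt_or_ge e.2 (n+1) with h | h
            · exact h
            · exact absurd ⟨h0, by omega⟩ hne0
          exact Or.inr ⟨n+1, Finset.mem_union_right _ (Finset.mem_Icc.2 ⟨by omega, le_refl _⟩), this⟩
        · exact Or.inl ⟨0, Finset.mem_union_left _ (Finset.mem_Icc.2 ⟨le_refl _, Nat.zero_le _⟩), h0⟩
      · intro e he f hf
        exact T.noncross e (hB'fact e he).1 f (hB'fact f hf).1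
    have hBcard : B.card = B'.card + 1 := by
      rw [hB', Finset.card_erase_of_mem hspB]
      have := Finset.card_pos.2 ⟨((0:ℕ), n+1), hspB⟩
      omega
    omega

def Sg (a c : ℕ) : ℕ := ∑ v ∈ Finset.Ioo a c, T.out v

lemma Sg_card (a c : ℕ) :
    Sg T a c = ((DD T).filter (fun e => a < e.1 ∧ e.1 < c)).card := by
  classical
  rw [Sg]
  rw [Finset.card_eq_sum_card_fiberwise (f := Prod.fst) (t := Finset.Ioo a c)
    (fun e he => Finset.mem_Ioo.2 ⟨(Finset.mem_filter.1 he).2.1, (Finset.mem_filter.1 he).2.2⟩)]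
  apply Finset.sum_congr rfl
  intro v hv
  have hv' := Finset.mem_Ioo.1 hv
  rw [out_eq]
  congr 1
  ext e
  simp only [Finset.mem_filter]
  constructor
  · rintro ⟨he, h1⟩
    exact ⟨⟨he, by omega, by omega⟩, h1⟩
  · rintro ⟨⟨he, -, -⟩, h1⟩
    exact ⟨he, h1⟩

lemma split_card (s : Finset (ℕ × ℕ)) (p q : ℕ × ℕ → Prop) [DecidablePred p] [DecidablePred q] :
    (s.filter (fun e => p e)).card
      = ((s.filter (fun e => p e)).filter (fun e => q e)).card
        + ((s.filter (fun e => p e)).filter (fun e => ¬ q e)).card :=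
  (Finset.card_filter_add_card_filter_not (s := s.filter (fun e => p e))
    (p := fun e => q e)).symm

lemma lemE (hn : 1 ≤ n) {a b : ℕ} (hab : (a, b) ∈ DD T) :
    Sg T a b + ((DD T).filter (fun e => e.1 = a ∧ e.2 ≤ b)).card + (a + 1) = b := by
  classical
  have h1 : (DD T).filter (fun e => a < e.1 ∧ e.1 < b)
      = (DD T).filter (fun e => a < e.1 ∧ e.2 ≤ b) := by
    ext e
    simp only [Finset.mem_filter]
    constructor
    · rintro ⟨he, ha, hb⟩
      refine ⟨he, ha, ?_⟩
      by_contra hc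
      exact DD_noncross T hn hab he ⟨ha, hb, by omega⟩
    · rintro ⟨he, ha, hb⟩
      have := DD_lt T hn he
      exact ⟨he, ha, by omega⟩
  have h2 := split_card (DD T) (fun e => a ≤ e.1 ∧ e.2 ≤ b) (fun e => e.1 = a)
  have h3 : ((DD T).filter (fun e => a ≤ e.1 ∧ e.2 ≤ b)).filter (fun e => e.1 = a)
      = (DD T).filter (fun e => e.1 = a ∧ e.2 ≤ b) := by
    ext e
    simp only [Finset.mem_filter]
    constructor
    · rintro ⟨⟨he, -, hb⟩, hq⟩
      exact ⟨he, hq, hb⟩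
    · rintro ⟨he, hq, hb⟩
      exact ⟨⟨he, by omega, hb⟩, hq⟩
  have h4 : ((DD T).filter (fun e => a ≤ e.1 ∧ e.2 ≤ b)).filter (fun e => ¬ e.1 = a)
      = (DD T).filter (fun e => a < e.1 ∧ e.2 ≤ b) := by
    ext e
    simp only [Finset.mem_filter]
    constructor
    · rintro ⟨⟨he, ha, hb⟩, hq⟩
      exact ⟨he, by omega, hb⟩
    · rintro ⟨he, ha, hb⟩
      exact ⟨⟨he, by omega, hb⟩, by omega⟩
  have h5 := lemD T hn hab
  have h6 := Sg_card T a b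
  rw [h1] at h6
  rw [h3, h4] at h2
  omega

lemma lemF (hn : 1 ≤ n) {a c β : ℕ} (haβ : (a, β) ∈ DD T) (hc1 : a < c) (hc2 : c < β)
    (hnc : (a, c) ∉ DD T) :
    c ≤ Sg T a c + ((DD T).filter (fun e => e.1 = a ∧ e.2 ≤ c)).card + (a + 1) := by
  classical
  have hβ2 := DD_lt T hn haβ
  simp only at hβ2
  set D := DD T with hD
  -- split the source-count
  have h2 := split_card D (fun e => a < e.1 ∧ e.1 < c) (fun e => e.2 ≤ c)
  have h3 : (D.filter (fun e => a < e.1 ∧ e.1 < c)).filter (fun e => e.2 ≤ c)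
      = D.filter (fun e => a < e.1 ∧ e.2 ≤ c) := by
    ext e
    simp only [Finset.mem_filter]
    constructor
    · rintro ⟨⟨he, ha, -⟩, hq⟩
      exact ⟨he, ha, hq⟩
    · rintro ⟨he, ha, hb⟩
      have := DD_lt T hn he
      exact ⟨⟨he, ha, by omega⟩, hb⟩
  have h4 : (D.filter (fun e => a < e.1 ∧ e.1 < c)).filter (fun e => ¬ e.2 ≤ c)
      = D.filter (fun e => a < e.1 ∧ e.1 < c ∧ c < e.2) := by
    ext e
    simp only [Finset.mem_filter]
    constructor
    · rintro ⟨⟨he, ha, hb⟩, hq⟩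
      exact ⟨he, ha, hb, by omega⟩
    · rintro ⟨he, ha, hb, hq⟩
      exact ⟨⟨he, ha, hb⟩, by omega⟩
  -- split Ifull
  have h5 := split_card D (fun e => a ≤ e.1 ∧ e.2 ≤ c) (fun e => e.1 = a)
  have h6 : (D.filter (fun e => a ≤ e.1 ∧ e.2 ≤ c)).filter (fun e => e.1 = a)
      = D.filter (fun e => e.1 = a ∧ e.2 ≤ c) := by
    ext e
    simp only [Finset.mem_filter]
    constructor
    · rintro ⟨⟨he, -, hb⟩, hq⟩
      exact ⟨he, hq, hb⟩
    · rintro ⟨he, hq, hb⟩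
      exact ⟨⟨he, by omega, hb⟩, hq⟩
  have h7 : (D.filter (fun e => a ≤ e.1 ∧ e.2 ≤ c)).filter (fun e => ¬ e.1 = a)
      = D.filter (fun e => a < e.1 ∧ e.2 ≤ c) := by
    ext e
    simp only [Finset.mem_filter]
    constructor
    · rintro ⟨⟨he, ha, hb⟩, hq⟩
      exact ⟨he, by omega, hb⟩
    · rintro ⟨he, ha, hb⟩
      exact ⟨⟨he, by omega, hb⟩, by omega⟩
  -- the big partition
  have hor : D.filter (fun e => (a ≤ e.1 ∧ e.2 ≤ c) ∨ (a < e.1 ∧ e.1 < c ∧ c < e.2))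
      = D.filter (fun e => a ≤ e.1 ∧ e.2 ≤ c) ∪ D.filter (fun e => a < e.1 ∧ e.1 < c ∧ c < e.2) := by
    rw [← Finset.filter_or]
  have hdisj2 : Disjoint (D.filter (fun e => a ≤ e.1 ∧ e.2 ≤ c))
      (D.filter (fun e => a < e.1 ∧ e.1 < c ∧ c < e.2)) := by
    rw [Finset.disjoint_left]
    intro e he he'
    have h1 := (Finset.mem_filter.1 he).2
    have h2 := (Finset.mem_filter.1 he').2
    omega
  have hcardor : (D.filter (fun e => (a ≤ e.1 ∧ e.2 ≤ c) ∨ (a < e.1 ∧ e.1 < c ∧ c < e.2))).card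
      = (D.filter (fun e => a ≤ e.1 ∧ e.2 ≤ c)).card
        + (D.filter (fun e => a < e.1 ∧ e.1 < c ∧ c < e.2)).card := by
    rw [hor, Finset.card_union_of_disjoint hdisj2]
  have htot := Finset.card_filter_add_card_filter_not
    (s := D) (p := fun e => (a ≤ e.1 ∧ e.2 ≤ c) ∨ (a < e.1 ∧ e.1 < c ∧ c < e.2))
  rw [DD_card T hn] at htot
  -- the Out part
  set Out := D.filter (fun e => ¬((a ≤ e.1 ∧ e.2 ≤ c) ∨ (a < e.1 ∧ e.1 < c ∧ c < e.2))) with hOut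
  have hspOut : ((0:ℕ), n+1) ∈ Out := by
    refine Finset.mem_filter.2 ⟨special_mem T, ?_⟩
    simp only
    omega
  set Out' := Out.erase ((0:ℕ), n+1) with hOut'
  have hOfact : ∀ e ∈ Out', e ∈ T.diag
      ∧ ¬(a ≤ e.1 ∧ e.2 ≤ c) ∧ ¬(a < e.1 ∧ e.1 < c ∧ c < e.2) := by
    intro e he
    have hne := Finset.ne_of_mem_erase he
    have heO := Finset.mem_filter.1 (Finset.mem_of_mem_erase he)
    rcases (mem_DD T).1 heO.1 with h | hd
    · exact absurd h hne
    · refine ⟨hd, ?_, ?_⟩ <;> (have := heO.2; omega)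
  have hends : ∀ e ∈ Out', (e.1 ≤ a ∨ c ≤ e.1) ∧ (e.2 ≤ a ∨ c ≤ e.2) := by
    intro e he
    obtain ⟨hd, hnp, hnq⟩ := hOfact e he
    have heD : e ∈ D := (Finset.mem_filter.1 (Finset.mem_of_mem_erase he)).1
    have hlt := DD_lt T hn heD
    constructor
    · by_contra hcon
      push_neg at hcon
      omega
    · by_contra hcon
      push_neg at hcon
      by_cases h1 : e.1 < a
      · exact DD_noncross T hn heD haβ ⟨h1, by omega, by omega⟩
      · omega
  have hdisj : Disjoint (Finset.Icc 0 a) (Finset.Icc c (n+1)) := by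
    rw [Finset.disjoint_left]
    intro x hx hx'
    have h1 := Finset.mem_Icc.1 hx
    have h2 := Finset.mem_Icc.1 hx'
    omega
  have hVcard : (Finset.Icc 0 a ∪ Finset.Icc c (n+1)).card = (a+1) + (n+2-c) := by
    rw [Finset.card_union_of_disjoint hdisj, Nat.card_Icc, Nat.card_Icc]
    omega
  have hO'card : Out'.card ≤ (a+1) + (n+2-c) - 3 := by
    have := chordBound ((a+1) + (n+2-c)) (Finset.Icc 0 a ∪ Finset.Icc c (n+1)) Out'
      (by rw [hVcard]) ?_ ?_ ?_ ?_
    · rwa [hVcard] at this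
    · intro e he
      obtain ⟨hd, hnp, hnq⟩ := hOfact e he
      have hlt := (T.isDiag _ hd).1
      have hlt2 := (T.isDiag _ hd).2.1
      obtain ⟨h1, h2⟩ := hends e he
      constructor
      · rcases h1 with h1 | h1
        · exact Finset.mem_union_left _ (Finset.mem_Icc.2 ⟨by omega, h1⟩)
        · exact Finset.mem_union_right _ (Finset.mem_Icc.2 ⟨h1, by omega⟩)
      · rcases h2 with h2 | h2
        · exact Finset.mem_union_left _ (Finset.mem_Icc.2 ⟨by omega, h2⟩)
        · exact Finset.mem_union_right _ (Finset.mem_Icc.2 ⟨h2, by omega⟩)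
    · intro e he
      obtain ⟨hd, hnp, hnq⟩ := hOfact e he
      have heD : e ∈ D := (Finset.mem_filter.1 (Finset.mem_of_mem_erase he)).1
      have hlt := (T.isDiag _ hd).1
      have hlt2 := (T.isDiag _ hd).2.1
      obtain ⟨h1, h2⟩ := hends e he
      rcases h2 with h2 | h2
      · exact ⟨e.1 + 1, Finset.mem_union_left _ (Finset.mem_Icc.2 ⟨by omega, by omega⟩),
          by omega, by omega⟩
      · rcases h1 with h1 | h1
        · rcases Nat.lt_or_ge e.1 a with hcc | hcc
          · exact ⟨a, Finset.mem_union_left _ (Finset.mem_Icc.2 ⟨Nat.zero_le _, le_refl _⟩),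
              hcc, by omega⟩
          · have he1 : e.1 = a := by omega
            have he2 : c < e.2 := by
              rcases Nat.lt_or_ge c e.2 with h | h
              · exact h
              · have : e.2 = c := by omega
                exfalso
                apply hnc
                have : e = (a, c) := Prod.ext he1 this
                rwa [this] at heD
            exact ⟨c, Finset.mem_union_right _ (Finset.mem_Icc.2 ⟨le_refl _, by omega⟩),
              by omega, he2⟩
        · exact ⟨e.1 + 1, Finset.mem_union_right _ (Finset.mem_Icc.2 ⟨by omega, by omega⟩),
            by omega, by omega⟩
    · intro e he
      obtain ⟨hd, -, -⟩ := hOfact e he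
      have hlt2 := (T.isDiag _ hd).2.1
      have hne0 := (T.isDiag _ hd).2.2
      rcases Nat.eq_zero_or_pos e.1 with h0 | h0
      · have : e.2 < n + 1 := by
          rcases Nat.lt_or_ge e.2 (n+1) with h | h
          · exact h
          · exact absurd ⟨h0, by omega⟩ hne0
        exact Or.inr ⟨n+1, Finset.mem_union_right _ (Finset.mem_Icc.2 ⟨by omega, le_refl _⟩), this⟩
      · exact Or.inl ⟨0, Finset.mem_union_left _ (Finset.mem_Icc.2 ⟨le_refl _, Nat.zero_le _⟩), h0⟩
    · intro e he f hf
      exact T.noncross e (hOfact e he).1 f (hOfact f hf).1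
  have hOcard : Out.card = Out'.card + 1 := by
    rw [hOut', Finset.card_erase_of_mem hspOut]
    have := Finset.card_pos.2 ⟨((0:ℕ), n+1), hspOut⟩
    omega
  have hS := Sg_card T a c
  rw [← hD] at hS
  rw [h3, h4] at h2
  rw [h6, h7] at h5
  omega

lemma DD_subset (hn : 1 ≤ n) (T T' : Triangulation n) (hout : ∀ v, T.out v = T'.out v) :
    DD T ⊆ DD T' := by
  classical
  intro e he
  obtain ⟨a, b⟩ := e
  have hSg : ∀ x y, Sg T x y = Sg T' x y := fun x y => Finset.sum_congr rfl (fun v _ => hout v)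
  have hab2 := DD_lt T hn he
  simp only at hab2
  set k := ((DD T).filter (fun e => e.1 = a ∧ e.2 ≤ b)).card with hk
  have hkpos : 1 ≤ k :=
    Finset.card_pos.2 ⟨(a, b), Finset.mem_filter.2 ⟨he, rfl, le_refl _⟩⟩
  have hE := lemE T hn he
  have hmin : ∀ c, a < c → c < b → c < Sg T a c + k + (a + 1) := by
    intro c hc1 hc2
    have hsub : (DD T).filter (fun e => e.1 = a ∧ e.2 ≤ c)
        ⊆ (DD T).filter (fun e => e.1 = a ∧ e.2 ≤ b) := by
      intro x hx
      have hx' := Finset.mem_filter.1 hx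
      exact Finset.mem_filter.2 ⟨hx'.1, hx'.2.1, by omega⟩
    have hlt : ((DD T).filter (fun e => e.1 = a ∧ e.2 ≤ c)).card < k := by
      refine Finset.card_lt_card ((Finset.ssubset_iff_of_subset hsub).2
        ⟨(a, b), Finset.mem_filter.2 ⟨he, rfl, le_refl _⟩, ?_⟩)
      intro hcon
      have := (Finset.mem_filter.1 hcon).2.2
      simp only at this
      omega
    by_cases hcd : (a, c) ∈ DD T
    · have := lemE T hn hcd
      omega
    · have := lemF T hn he hc1 hc2 hcd
      omega
  by_contra hnb
  set j := ((DD T').filter (fun e => e.1 = a ∧ e.2 ≤ b)).card with hj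
  have hjk : j < k := by
    by_contra hge
    push_neg at hge
    have hne : ((DD T').filter (fun e => e.1 = a ∧ e.2 ≤ b)).Nonempty := by
      rw [← Finset.card_pos, ← hj]
      omega
    obtain ⟨em, hemm, hemax⟩ := Finset.exists_max_image _ (fun e => e.2) hne
    have hem' := Finset.mem_filter.1 hemm
    have hem1 : em.1 = a := hem'.2.1
    have hem2 : em.2 ≤ b := hem'.2.2
    have hemDD : (a, em.2) ∈ DD T' := by
      have hpe : em = (a, em.2) := Prod.ext hem1 rfl
      rw [← hpe]
      exact hem'.1
    have hlt2 := DD_lt T' hn hemDD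
    simp only at hlt2
    have hemb : em.2 < b := by
      rcases Nat.lt_or_ge em.2 b with hx | hx
      · exact hx
      · have hbb : em.2 = b := by omega
        rw [hbb] at hemDD
        exact absurd hemDD hnb
    have hseteq : (DD T').filter (fun e => e.1 = a ∧ e.2 ≤ em.2)
        = (DD T').filter (fun e => e.1 = a ∧ e.2 ≤ b) := by
      ext x
      simp only [Finset.mem_filter]
      constructor
      · rintro ⟨hx, h1, h2⟩
        exact ⟨hx, h1, by omega⟩
      · rintro ⟨hx, h1, h2⟩
        exact ⟨hx, h1, hemax x (Finset.mem_filter.2 ⟨hx, h1, h2⟩)⟩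
    have heq := lemE T' hn hemDD
    rw [hseteq] at heq
    have hm := hmin em.2 (by omega) hemb
    rw [hSg a em.2] at hm
    omega
  have hkout : k ≤ ((DD T').filter (fun e => e.1 = a)).card := by
    have h1 : k ≤ ((DD T).filter (fun e => e.1 = a)).card := by
      rw [hk]
      apply Finset.card_le_card
      intro x hx
      have hx' := Finset.mem_filter.1 hx
      exact Finset.mem_filter.2 ⟨hx'.1, hx'.2.1⟩
    have h2 : ((DD T).filter (fun e => e.1 = a)).card
        = ((DD T').filter (fun e => e.1 = a)).card := by
      rw [← out_eq, ← out_eq, hout]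
    omega
  have hnsub : ¬ ((DD T').filter (fun e => e.1 = a))
      ⊆ ((DD T').filter (fun e => e.1 = a ∧ e.2 ≤ b)) := by
    intro hcon
    have := Finset.card_le_card hcon
    omega
  obtain ⟨e', he'f, he'nb⟩ := Finset.not_subset.1 hnsub
  have he'' := Finset.mem_filter.1 he'f
  have he'1 : e'.1 = a := he''.2
  have he'b : b < e'.2 := by
    rcases Nat.lt_or_ge b e'.2 with hx | hx
    · exact hx
    · exact absurd (Finset.mem_filter.2 ⟨he''.1, he'1, hx⟩) he'nb
  have he'DD : (a, e'.2) ∈ DD T' := by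
    have hpe : e' = (a, e'.2) := Prod.ext he'1 rfl
    rw [← hpe]
    exact he''.1
  have hF := lemF T' hn he'DD (by omega : a < b) he'b hnb
  have hE' := hE
  rw [hSg a b] at hE'
  omega

lemma tri_eq {T' : Triangulation n} (h : T.diag = T'.diag) : T = T' := by
  cases T with
  | mk d hd hnc hc =>
    cases T' with
    | mk d' hd' hnc' hc' =>
      obtain rfl : d = d' := h
      rfl

lemma diag_eq_erase : T.diag = (DD T).erase (0, n + 1) := by
  rw [DD, Finset.erase_insert (special_not_diag T)]

end Stmt7


/-- Two triangulations of a convex `(n+2)`-gon with the same outdegree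
sequence are equal. -/
theorem stmt7 (n : ℕ) (T T' : Triangulation n) (h : T.outList = T'.outList) :
    T = T' := by
  apply Stmt7.tri_eq
  rcases Nat.eq_zero_or_pos n with rfl | hn
  · have hd : ∀ (S : Triangulation 0), S.diag = ∅ := by
      intro S
      rw [Finset.eq_empty_iff_forall_notMem]
      intro e heS
      have := S.isDiag e heS
      omega
    rw [hd T, hd T']
  · have hout : ∀ v, T.out v = T'.out v := by
      have h2 : (List.range n).map T.out = (List.range n).map T'.out := h
      have h' := List.map_eq_map_iff.mp h2
      intro v
      rcases Nat.lt_or_ge v n with hv | hv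
      · exact h' v (List.mem_range.2 hv)
      · have hz : ∀ (S : Triangulation n), S.out v = 0 := by
          intro S
          rw [Triangulation.out, if_neg (by omega)]
          have hemp : S.diag.filter (fun e => e.1 = v) = ∅ := by
            rw [Finset.eq_empty_iff_forall_notMem]
            intro e heS
            have h1 := (Finset.mem_filter.1 heS).1
            have h2 := (Finset.mem_filter.1 heS).2
            have := S.isDiag e h1
            omega
          rw [hemp]
          simp
        rw [hz T, hz T']
    have hDD : Stmt7.DD T = Stmt7.DD T' :=
      Finset.eq_of_subset_of_card_le (Stmt7.DD_subset hn T T' hout)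
        (by rw [Stmt7.DD_card T hn, Stmt7.DD_card T' hn])
    rw [Stmt7.diag_eq_erase T, Stmt7.diag_eq_erase T', hDD]
end

section
/- The map that sends a ballot sequence B = (b_1,...,b_{2n}) (with n ones and n zeros, every prefix having at least as many ones as zeros) to the sequence (d_1,...,d_n), where d_1 is the number of 1s before the first 0 of B and d_i (for i > 1) is the number of 1s strictly between the (i-1)-st 0 and the i-th 0 of B, is a bijection onto the set of sequences of nonnegative integers with sum_{i=1}^n d_i = n and sum_{i=1}^{l} d_{n+1-i} <= l for all 1 <= l <= n. -/
lemma degToBallot_nil : degToBallot [] = [] := rfl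

lemma degToBallot_cons (a : ℕ) (d : List ℕ) :
    degToBallot (a :: d) = List.replicate a 1 ++ 0 :: degToBallot d := by
  simp [degToBallot]

lemma degToBallot_sum (d : List ℕ) : (degToBallot d).sum = d.sum := by
  induction d with
  | nil => rfl
  | cons a t ih => simp [degToBallot_cons, ih, List.sum_replicate]

lemma degToBallot_length (d : List ℕ) : (degToBallot d).length = d.sum + d.length := by
  induction d with
  | nil => rfl
  | cons a t ih => simp [degToBallot_cons, ih]; omega

lemma degToBallot_mem (d : List ℕ) : ∀ x ∈ degToBallot d, x = 0 ∨ x = 1 := by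
  induction d with
  | nil => simp [degToBallot_nil]
  | cons a t ih =>
    intro x hx
    rw [degToBallot_cons] at hx
    simp only [List.mem_append, List.mem_cons] at hx
    rcases hx with h | h | h
    · exact Or.inr (List.eq_of_mem_replicate h)
    · exact Or.inl h
    · exact ih x h

lemma ballotToDeg_degToBallot (d : List ℕ) : ballotToDeg (degToBallot d) = d := by
  have key : ∀ d : List ℕ, (degToBallot d).splitOn 0 =
      (d.map fun a => List.replicate a 1) ++ [[]] := by
    intro d
    induction d with
    | nil => rfl
    | cons a t ih =>
      rw [degToBallot_cons]
      show List.splitOnP _ _ = _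
      rw [List.splitOnP_first (fun x hx => by
          simp [List.eq_of_mem_replicate hx]) 0 (by simp) _]
      simp only [List.map_cons, List.cons_append]
      exact congrArg (List.cons _) ih
  rw [ballotToDeg, key]
  simp [Function.comp_def]

lemma take_degToBallot_cons (a m' : ℕ) (t : List ℕ) :
    (degToBallot (a :: t)).take (a + 1 + m') =
      List.replicate a 1 ++ 0 :: (degToBallot t).take m' := by
  rw [degToBallot_cons, List.take_append]
  rw [List.take_of_length_le (by simp; omega)]
  congr 1
  simp only [List.length_replicate]
  have h : a + 1 + m' - a = m' + 1 := by omega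
  rw [h]
  simp

lemma ballot_of_C : ∀ (d : List ℕ) (s : ℕ),
    (∀ j ≤ d.length, j ≤ s + (d.take j).sum) →
    ∀ m ≤ (degToBallot d).length, m ≤ 2 * ((degToBallot d).take m).sum + s := by
  intro d
  induction d with
  | nil => intro s _ m hm; simp [degToBallot_nil] at hm; omega
  | cons a t ih =>
    intro s hC m hm
    have h1 : 1 ≤ s + a := by simpa using hC 1 (by simp)
    rcases le_or_gt m a with h | h
    · have he : (degToBallot (a :: t)).take m = List.replicate m 1 := by
        rw [degToBallot_cons, List.take_append_of_le_length (by simpa using h)]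
        simp [List.take_replicate, Nat.min_eq_left h]
      rw [he]
      simp [List.sum_replicate]
      omega
    · obtain ⟨m', rfl⟩ : ∃ m', m = a + 1 + m' := ⟨m - (a + 1), by omega⟩
      rw [take_degToBallot_cons]
      rw [degToBallot_length] at hm
      have hm' : m' ≤ (degToBallot t).length := by
        rw [degToBallot_length]; simp at hm; omega
      have hC' : ∀ j ≤ t.length, j ≤ (s + a - 1) + (t.take j).sum := by
        intro j hj
        have h2 := hC (j + 1) (by simp; omega)
        rw [List.take_succ_cons] at h2
        simp at h2
        omega
      have h3 := ih (s + a - 1) hC' m' hm'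
      simp [List.sum_append, List.sum_replicate]
      omega

lemma C_of_ballot : ∀ (d : List ℕ) (s : ℕ),
    (∀ m ≤ (degToBallot d).length, m ≤ 2 * ((degToBallot d).take m).sum + s) →
    ∀ j ≤ d.length, j ≤ s + (d.take j).sum := by
  intro d
  induction d with
  | nil => intro s _ j hj; simp at hj; omega
  | cons a t ih =>
    intro s hB j hj
    have hlen : (degToBallot (a :: t)).length = a + 1 + (degToBallot t).length := by
      rw [degToBallot_length, degToBallot_length]; simp; omega
    have h1 : 1 ≤ a + s := by
      have h2 := hB (a + 1) (by omega)
      rw [show a + 1 = a + 1 + 0 from rfl, take_degToBallot_cons] at h2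
      simp [List.sum_replicate] at h2
      omega
    cases j with
    | zero => omega
    | succ j' =>
      have hB' : ∀ m ≤ (degToBallot t).length,
          m ≤ 2 * ((degToBallot t).take m).sum + (a + s - 1) := by
        intro m hm
        have h2 := hB (a + 1 + m) (by omega)
        rw [take_degToBallot_cons] at h2
        simp [List.sum_append, List.sum_replicate] at h2
        omega
      have h3 := ih (a + s - 1) hB' j' (by simp at hj; omega)
      rw [List.take_succ_cons]
      simp
      omega

lemma revtake_sum (d : List ℕ) (l : ℕ) :
    (d.reverse.take l).sum + (d.take (d.length - l)).sum = d.sum := by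
  rw [List.take_reverse, List.sum_reverse, Nat.add_comm, List.sum_take_add_sum_drop]

lemma exists_deg : ∀ (N : ℕ) (B : List ℕ), B.length ≤ N → (∀ x ∈ B, x = 0 ∨ x = 1) →
    B.getLast? = some 0 ∨ B = [] → ∃ d, degToBallot d = B := by
  intro N
  induction N with
  | zero =>
    intro B hB _ _
    rw [Nat.le_zero, List.length_eq_zero_iff] at hB
    exact ⟨[], by simp [hB, degToBallot_nil]⟩
  | succ N ih =>
    intro B hB h01 hlast
    rcases eq_or_ne B [] with rfl | hne
    · exact ⟨[], rfl⟩
    rcases hlast with hlast | rfl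
    swap
    · exact absurd rfl hne
    set a := (B.takeWhile (· == 1)).length with ha
    have hsplit : B.takeWhile (· == 1) ++ B.dropWhile (· == 1) = B :=
      List.takeWhile_append_dropWhile
    have htake : B.takeWhile (· == 1) = List.replicate a 1 := by
      apply List.eq_replicate_of_mem
      intro x hx
      have h2 := List.mem_takeWhile_imp hx
      simpa using h2
    have hdw : B.dropWhile (· == 1) ≠ [] := by
      intro h
      rw [h, List.append_nil] at hsplit
      rw [← hsplit, htake] at hlast
      have h0 : (0 : ℕ) ∈ List.replicate a 1 := List.mem_of_getLast? hlast
      simpa using List.eq_of_mem_replicate h0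
    obtain ⟨hd, tl, hcons⟩ := List.exists_cons_of_ne_nil hdw
    have hh : (B.dropWhile (· == 1)).head hdw = hd := by simp [hcons]
    have hnot := List.head_dropWhile_not (· == 1) (l := B) hdw
    rw [hh] at hnot
    have hhd0 : hd = 0 := by
      have hmem : hd ∈ B := by
        have : hd ∈ B.dropWhile (· == 1) := by rw [hcons]; exact List.mem_cons_self
        exact (List.dropWhile_sublist _).subset this
      rcases h01 hd hmem with h | h
      · exact h
      · simp [h] at hnot
    have hBeq : B = List.replicate a 1 ++ hd :: tl := by rw [← hsplit, htake, hcons]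
    have htl01 : ∀ x ∈ tl, x = 0 ∨ x = 1 := by
      intro x hx
      exact h01 x (by rw [hBeq]; simp [hx])
    have htllen : tl.length ≤ N := by
      have : B.length = a + 1 + tl.length := by rw [hBeq]; simp; omega
      omega
    have htllast : tl.getLast? = some 0 ∨ tl = [] := by
      rcases eq_or_ne tl [] with rfl | htlne
      · exact Or.inr rfl
      left
      rw [hBeq] at hlast
      rw [List.getLast?_append_of_ne_nil _ (by simp)] at hlast
      rw [show hd :: tl = [hd] ++ tl from rfl,
        List.getLast?_append_of_ne_nil _ htlne] at hlast
      exact hlast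
    obtain ⟨d', hd'⟩ := ih tl htllen htl01 htllast
    exact ⟨a :: d', by rw [degToBallot_cons, hd', hBeq, hhd0]⟩

lemma key_inv (n : ℕ) (B : List ℕ) (hB : IsBallot n B) :
    degToBallot (ballotToDeg B) = B := by
  obtain ⟨hlen, h01, hsum, hpre⟩ := hB
  have hlast : B.getLast? = some 0 ∨ B = [] := by
    rcases eq_or_ne B [] with rfl | hne
    · exact Or.inr rfl
    left
    have hn : 1 ≤ n := by
      rcases Nat.eq_zero_or_pos n with rfl | h
      · exact absurd (List.length_eq_zero_iff.mp (by simpa using hlen)) hne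
      · exact h
    have hm := hpre (2 * n - 1) (by omega)
    have hBdec : B.take (2 * n - 1) ++ B.drop (2 * n - 1) = B := List.take_append_drop _ _
    have hdl : (B.drop (2 * n - 1)).length = 1 := by
      rw [List.length_drop, hlen]; omega
    obtain ⟨x, hx⟩ := List.length_eq_one_iff.mp hdl
    have hxB : x ∈ B := by
      have : x ∈ B.drop (2 * n - 1) := by rw [hx]; exact List.mem_singleton_self _
      exact (List.drop_sublist _ _).subset this
    have hsum2 : (B.take (2 * n - 1)).sum + x = n := by
      conv_rhs => rw [← hsum, ← hBdec]
      rw [List.sum_append, hx]; simp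
    have hx0 : x = 0 := by
      rcases h01 x hxB with h | h
      · exact h
      · omega
    rw [← hBdec, hx, hx0]
    rw [List.getLast?_append_of_ne_nil _ (by simp)]
    rfl
  obtain ⟨d, hd⟩ := exists_deg B.length B le_rfl h01 hlast
  rw [← hd, ballotToDeg_degToBallot]


/-- The map sending a ballot sequence `B` to the sequence `(d_1,…,d_n)`, where
`d_i` counts the ones between the `(i-1)`-st and `i`-th zero of `B`, is a
bijection onto the set of valid triangulation outdegree sequences. -/
theorem stmt8 (n : ℕ) :
    (∀ B : List ℕ, IsBallot n B → IsTriDeg n (ballotToDeg B)) ∧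
    (∀ B B' : List ℕ, IsBallot n B → IsBallot n B' →
      ballotToDeg B = ballotToDeg B' → B = B') ∧
    (∀ d : List ℕ, IsTriDeg n d → ∃ B : List ℕ, IsBallot n B ∧ ballotToDeg B = d) := by
  refine ⟨?_, ?_, ?_⟩
  · intro B hB
    have hinv := key_inv n B hB
    obtain ⟨hlen, h01, hsum, hpre⟩ := hB
    set d := ballotToDeg B with hdd
    have hsumd : d.sum = n := by rw [← degToBallot_sum d, hinv, hsum]
    have hlend : d.length = n := by
      have h2 := degToBallot_length d
      rw [hinv, hlen, hsumd] at h2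
      omega
    have hC : ∀ j ≤ d.length, j ≤ (d.take j).sum := by
      intro j hj
      have h3 := C_of_ballot d 0 (fun m hm => by
        have hm2 : m ≤ 2 * n := by
          rw [degToBallot_length, hsumd, hlend] at hm; omega
        rw [hinv]
        have := hpre m hm2
        omega) j hj
      omega
    refine ⟨hlend, hsumd, fun l hl => ?_⟩
    have h4 := revtake_sum d l
    have h5 := hC (d.length - l) (by omega)
    rw [hlend] at h4 h5
    omega
  · intro B B' hB hB' heq
    rw [← key_inv n B hB, ← key_inv n B' hB', heq]
  · intro d hd
    obtain ⟨hlen, hsum, htri⟩ := hd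
    refine ⟨degToBallot d, ⟨?_, degToBallot_mem d, ?_, ?_⟩, ballotToDeg_degToBallot d⟩
    · rw [degToBallot_length, hsum, hlen]; omega
    · rw [degToBallot_sum, hsum]
    · intro m hm
      have hC : ∀ j ≤ d.length, j ≤ 0 + (d.take j).sum := by
        intro j hj
        rw [hlen] at hj
        have h4 := revtake_sum d (n - j)
        have h5 := htri (n - j) (by omega)
        rw [hlen, show n - (n - j) = j by omega] at h4
        omega
      have h6 := ballot_of_C d 0 hC m
        (by rw [degToBallot_length, hsum, hlen]; omega)
      omega
end

section
/- Every t-gonal tiling of a convex polygon with at least 2t-2 points has at least two ears, and at least one ear is not incident to the edge p_1 p_{n+2}. -/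
section EarLemmas

variable {t n : ℕ}

lemma hull_iff {n c d : ℕ} : (c, d) ∈ hullEdges n ↔ (c ≤ n ∧ d = c + 1) ∨ (c = 0 ∧ d = n + 1) := by
  simp only [hullEdges, Finset.mem_union, Finset.mem_image, Finset.mem_range,
    Finset.mem_singleton, Prod.mk.injEq]
  constructor
  · rintro (⟨i, hi, h1, h2⟩ | ⟨h1, h2⟩) <;> omega
  · rintro (⟨h1, h2⟩ | ⟨h1, h2⟩)
    · exact Or.inl ⟨c, by omega, rfl, by omega⟩
    · exact Or.inr ⟨h1, h2⟩

lemma mem_fE {S : Finset ℕ} {c d : ℕ} : (c, d) ∈ faceEdges S ↔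
    c ∈ S ∧ d ∈ S ∧ c < d ∧ ((∀ x ∈ S, ¬(c < x ∧ x < d)) ∨ ∀ x ∈ S, c ≤ x ∧ x ≤ d) := by
  simp only [faceEdges, Finset.mem_filter, Finset.mem_product]
  tauto

lemma consec_around {S : Finset ℕ} {x c₀ d₀ : ℕ} (hx : x ∉ S) (hc₀ : c₀ ∈ S) (hd₀ : d₀ ∈ S)
    (h1 : c₀ < x) (h2 : x < d₀) :
    ∃ c d, c ∈ S ∧ d ∈ S ∧ c₀ ≤ c ∧ c < x ∧ x < d ∧ d ≤ d₀ ∧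
      (∀ w ∈ S, ¬(c < w ∧ w < d)) ∧ (c, d) ∈ faceEdges S := by
  have hne1 : (S.filter (· < x)).Nonempty := ⟨c₀, Finset.mem_filter.mpr ⟨hc₀, h1⟩⟩
  have hne2 : (S.filter (x < ·)).Nonempty := ⟨d₀, Finset.mem_filter.mpr ⟨hd₀, h2⟩⟩
  set c := (S.filter (· < x)).max' hne1 with hc
  set d := (S.filter (x < ·)).min' hne2 with hd
  have hcS := Finset.mem_filter.mp ((S.filter (· < x)).max'_mem hne1)
  have hdS := Finset.mem_filter.mp ((S.filter (x < ·)).min'_mem hne2)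
  have hcc : c₀ ≤ c := Finset.le_max' (S.filter (· < x)) c₀ (Finset.mem_filter.mpr ⟨hc₀, h1⟩)
  have hdd : d ≤ d₀ := Finset.min'_le (S.filter (x < ·)) d₀ (Finset.mem_filter.mpr ⟨hd₀, h2⟩)
  have hgap : ∀ w ∈ S, ¬(c < w ∧ w < d) := by
    rintro w hw ⟨h3, h4⟩
    rcases lt_trichotomy w x with h | h | h
    · exact absurd (Finset.le_max' (S.filter (· < x)) w (Finset.mem_filter.mpr ⟨hw, h⟩)) (by omega)
    · exact hx (h ▸ hw)
    · exact absurd (Finset.min'_le (S.filter (x < ·)) w (Finset.mem_filter.mpr ⟨hw, h⟩)) (by omega)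
  refine ⟨c, d, hcS.1, hdS.1, hcc, hcS.2, hdS.2, hdd, hgap, ?_⟩
  exact mem_fE.mpr ⟨hcS.1, hdS.1, by omega, Or.inl hgap⟩

lemma minmax_edge {S : Finset ℕ} (hne : S.Nonempty) (h : S.min' hne < S.max' hne) :
    (S.min' hne, S.max' hne) ∈ faceEdges S :=
  mem_fE.mpr ⟨S.min'_mem hne, S.max'_mem hne, h, Or.inr fun x hx => ⟨S.min'_le x hx, S.le_max' x hx⟩⟩

lemma gap_or_full {G : Finset ℕ} {a b : ℕ} (ha : a ∈ G) (hb : b ∈ G) :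
    (∃ c d, (c,d) ∈ faceEdges G ∧ a ≤ c ∧ d ≤ b ∧ c + 2 ≤ d ∧ ∀ x ∈ G, ¬(c < x ∧ x < d)) ∨
    ∀ j, a ≤ j → j ≤ b → j ∈ G := by
  by_cases h : ∀ j, a ≤ j → j ≤ b → j ∈ G
  · exact Or.inr h
  · push_neg at h
    obtain ⟨j, hja, hjb, hjG⟩ := h
    have h1 : a < j := lt_of_le_of_ne hja (by rintro rfl; exact hjG ha)
    have h2 : j < b := lt_of_le_of_ne hjb (by rintro rfl; exact hjG hb)
    obtain ⟨c, d, hcG, hdG, hac, hcj, hjd, hdb, hgap, he⟩ := consec_around hjG ha hb h1 h2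
    exact Or.inl ⟨c, d, he, hac, hdb, by omega, hgap⟩

lemma face_of_hull (T : Tiling t n) {e : ℕ × ℕ} (he : e ∈ hullEdges n) :
    ∃ S, S ∈ T.faces ∧ e ∈ faceEdges S := by
  have h := T.boundary e he
  obtain ⟨S, hS⟩ := Finset.card_eq_one.mp h
  have hmem : S ∈ T.faces.filter (fun S => e ∈ faceEdges S) := by
    rw [hS]; exact Finset.mem_singleton_self S
  exact ⟨S, (Finset.mem_filter.mp hmem).1, (Finset.mem_filter.mp hmem).2⟩

lemma inter_ab (T : Tiling t n) {F G : Finset ℕ} (hF : F ∈ T.faces) (hG : G ∈ T.faces)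
    {a b : ℕ} (hab : a < b) (haF : a ∈ F) (hbF : b ∈ F) (haG : a ∈ G) (hbG : b ∈ G)
    (hne : F ≠ G) : ∀ x, x ∈ F → x ∈ G → x = a ∨ x = b := by
  have hsub : ({a, b} : Finset ℕ) ⊆ F ∩ G := by
    intro x hx
    simp only [Finset.mem_insert, Finset.mem_singleton] at hx
    rcases hx with rfl | rfl
    · exact Finset.mem_inter.mpr ⟨haF, haG⟩
    · exact Finset.mem_inter.mpr ⟨hbF, hbG⟩
  have hcard : ({a, b} : Finset ℕ).card = 2 := by
    rw [Finset.card_insert_of_notMem (by simp; omega), Finset.card_singleton]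
  have hle := T.share F hF G hG hne
  have heq : ({a, b} : Finset ℕ) = F ∩ G :=
    Finset.eq_of_subset_of_card_le hsub (by omega)
  intro x hxF hxG
  have hx : x ∈ ({a, b} : Finset ℕ) := heq ▸ Finset.mem_inter.mpr ⟨hxF, hxG⟩
  simpa using hx

lemma third_vertex (T : Tiling t n) (ht : 3 ≤ t) {F : Finset ℕ} (hF : F ∈ T.faces) (a b : ℕ) :
    ∃ z ∈ F, z ≠ a ∧ z ≠ b := by
  by_contra h
  push_neg at h
  have hsub : F ⊆ {a, b} := by
    intro x hx
    simp only [Finset.mem_insert, Finset.mem_singleton]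
    by_cases hxa : x = a
    · exact Or.inl hxa
    · exact Or.inr (h x hx hxa)
  have h1 := Finset.card_le_card hsub
  have h2 : ({a, b} : Finset ℕ).card ≤ 2 := (Finset.card_insert_le a {b}).trans (by simp)
  have h3 := T.size F hF
  omega

lemma card_range_le {S : Finset ℕ} {n : ℕ} (h : S ⊆ Finset.range (n+2)) {x : ℕ} (hx : x ∈ S) :
    x ≤ n + 1 := by
  have := h hx
  simp only [Finset.mem_range] at this
  omega

lemma isEar_iff {t n : ℕ} {T : Tiling t n} {S : Finset ℕ} :
    IsEar T S ↔ (S ∈ T.faces ∧ (faceEdges S \ hullEdges n).card = 1) := Iff.rfl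

end EarLemmas

section HardCases

variable {t n : ℕ}

/-- Impossible: a face `G` containing all of `[a,b]` plus a vertex `y > b`, while a face `F`
has `(a,b)` as an edge and avoids the open interval `(a,b)`. -/
lemma H1 (T : Tiling t n) (ht : 3 ≤ t) {F G : Finset ℕ} {a b : ℕ}
    (hF : F ∈ T.faces) (hG : G ∈ T.faces) (hab : a + 2 ≤ b)
    (hFe : (a, b) ∈ faceEdges F)
    (hFav : ∀ x ∈ F, ¬(a < x ∧ x < b))
    (hfull : ∀ j, a ≤ j → j ≤ b → j ∈ G)
    {y : ℕ} (hyG : y ∈ G) (hy : b < y) : False := by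
  have haF : a ∈ F := (mem_fE.mp hFe).1
  have hbF : b ∈ F := (mem_fE.mp hFe).2.1
  have haG : a ∈ G := hfull a le_rfl (by omega)
  have hbG : b ∈ G := hfull b (by omega) le_rfl
  have ha1G : a + 1 ∈ G := hfull (a+1) (by omega) (by omega)
  have hne : F ≠ G := fun h => hFav (a+1) (h ▸ ha1G) ⟨by omega, by omega⟩
  have hinter := inter_ab T hF hG (show a < b by omega) haF hbF haG hbG hne
  have hFne : F.Nonempty := ⟨a, haF⟩
  have hGne : G.Nonempty := ⟨a, haG⟩
  by_cases hw : ∃ w ∈ F, b < w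
  · obtain ⟨w, hwF, hbw⟩ := hw
    set gG := G.max' hGne with hgG
    have hgGG : gG ∈ G := G.max'_mem hGne
    have hgGy : y ≤ gG := Finset.le_max' G y hyG
    have hgGF : gG ∉ F := by
      intro h
      rcases hinter gG h hgGG with rfl | rfl <;> omega
    have hmGa : G.min' hGne ≤ a := Finset.min'_le G a haG
    rcases lt_trichotomy w gG with hlt | heq | hgt
    · -- w strictly inside G's range, above b
      have hwG : w ∉ G := by
        intro h
        rcases hinter w hwF h with rfl | rfl <;> omega
      obtain ⟨c, d, hcG, hdG, hbc, hcw, hwd, hdgG, hgap, hcd⟩ :=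
        consec_around hwG hbG hgGG hbw hlt
      by_cases hbc' : b < c
      · have hcF : c ∉ F := by
          intro h
          rcases hinter c h hcG with rfl | rfl <;> omega
        obtain ⟨u, v, huF, hvF, hau, huc, hcv, hvw, _, huv⟩ :=
          consec_around hcF haF hwF (by omega) hcw
        exact T.noncross F hF G hG (u, v) huv (c, d) hcd ⟨huc, hcv, by omega⟩
      · have hcb : c = b := by omega
        subst hcb
        by_cases hw2 : ∃ w2 ∈ F, d < w2
        · obtain ⟨w2, hw2F, hdw2⟩ := hw2
          have hdF : d ∉ F := by
            intro h
            rcases hinter d h hdG with rfl | rfl <;> omega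
          obtain ⟨p, q, hpF, hqF, hwp, hpd, hdq, _, _, hpq⟩ :=
            consec_around hdF hwF hw2F hwd hdw2
          exact T.noncross G hG F hF (c, d) hcd (p, q) hpq ⟨by omega, hpd, hdq⟩
        · push_neg at hw2
          have hdF : d ∉ F := by
            intro h
            rcases hinter d h hdG with rfl | rfl <;> omega
          set MF := F.max' hFne with hMF
          have hMFF : MF ∈ F := F.max'_mem hFne
          have hMFd : MF ≤ d := hw2 MF hMFF
          have hMFd' : MF < d := lt_of_le_of_ne hMFd (fun h => hdF (h ▸ hMFF))
          have hwMF : w ≤ MF := Finset.le_max' F w hwF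
          have hmFa : F.min' hFne ≤ a := Finset.min'_le F a haF
          have hFmm : (F.min' hFne, MF) ∈ faceEdges F := minmax_edge hFne (by omega)
          exact T.noncross F hF G hG (F.min' hFne, MF) hFmm (c, d) hcd
            ⟨by omega, by omega, by omega⟩
    · exact hgGF (heq ▸ hwF)
    · obtain ⟨u, v, huF, hvF, hbu, hugG, hgGv, _, _, huv⟩ :=
        consec_around hgGF hbF hwF (by omega) hgt
      have hGmm : (G.min' hGne, gG) ∈ faceEdges G := minmax_edge hGne (by omega)
      exact T.noncross G hG F hF (G.min' hGne, gG) hGmm (u, v) huv ⟨by omega, hugG, hgGv⟩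
  · push_neg at hw
    obtain ⟨z, hzF, hza, hzb⟩ := third_vertex T ht hF a b
    have hz : z < a := by
      have h1 := hFav z hzF
      have h2 := hw z hzF
      omega
    set mF := F.min' hFne with hmF
    have hmFF : mF ∈ F := F.min'_mem hFne
    have hmFz : mF ≤ z := Finset.min'_le F z hzF
    have hFmm : (mF, b) ∈ faceEdges F :=
      mem_fE.mpr ⟨hmFF, hbF, by omega, Or.inr fun x hx => ⟨Finset.min'_le F x hx, hw x hx⟩⟩
    set mG := G.min' hGne with hmG
    have hmGG : mG ∈ G := G.min'_mem hGne
    have hmGa : mG ≤ a := Finset.min'_le G a haG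
    rcases lt_trichotomy mF mG with hlt | heq | hgt
    · set MG := G.max' hGne with hMG
      have hMGy : y ≤ MG := Finset.le_max' G y hyG
      have hGmm : (mG, MG) ∈ faceEdges G := minmax_edge hGne (by omega)
      exact T.noncross F hF G hG (mF, b) hFmm (mG, MG) hGmm ⟨hlt, by omega, by omega⟩
    · rcases hinter mF hmFF (heq ▸ hmGG) with rfl | rfl <;> omega
    · have hmFG : mF ∉ G := by
        intro h
        rcases hinter mF hmFF h with rfl | rfl <;> omega
      obtain ⟨u, v, huG, hvG, _, humF, hmFv, hva, _, huv⟩ :=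
        consec_around hmFG hmGG haG hgt (by omega)
      exact T.noncross G hG F hF (u, v) huv (mF, b) hFmm ⟨humF, hmFv, by omega⟩

/-- Impossible: a face `G` containing all of `[a,b]` plus a vertex below `a` (and nothing
above `b`), while a face `F` has `(a,b)` as an edge and avoids the open interval `(a,b)`. -/
lemma H2 (T : Tiling t n) (ht : 3 ≤ t) {F G : Finset ℕ} {a b : ℕ}
    (hF : F ∈ T.faces) (hG : G ∈ T.faces) (hab : a + 2 ≤ b)
    (hFe : (a, b) ∈ faceEdges F)
    (hFav : ∀ x ∈ F, ¬(a < x ∧ x < b))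
    (hfull : ∀ j, a ≤ j → j ≤ b → j ∈ G)
    (hGle : ∀ x ∈ G, x ≤ b)
    {w₀ : ℕ} (hw₀G : w₀ ∈ G) (hw₀ : w₀ < a) : False := by
  have haF : a ∈ F := (mem_fE.mp hFe).1
  have hbF : b ∈ F := (mem_fE.mp hFe).2.1
  have haG : a ∈ G := hfull a le_rfl (by omega)
  have hbG : b ∈ G := hfull b (by omega) le_rfl
  have ha1G : a + 1 ∈ G := hfull (a+1) (by omega) (by omega)
  have hne : F ≠ G := fun h => hFav (a+1) (h ▸ ha1G) ⟨by omega, by omega⟩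
  have hinter := inter_ab T hF hG (show a < b by omega) haF hbF haG hbG hne
  have hFne : F.Nonempty := ⟨a, haF⟩
  have hGne : G.Nonempty := ⟨a, haG⟩
  set mG := G.min' hGne with hmG
  have hmGG : mG ∈ G := G.min'_mem hGne
  have hmGw : mG ≤ w₀ := Finset.min'_le G w₀ hw₀G
  have hGmm : (mG, b) ∈ faceEdges G :=
    mem_fE.mpr ⟨hmGG, hbG, by omega, Or.inr fun x hx => ⟨Finset.min'_le G x hx, hGle x hx⟩⟩
  by_cases hzlt : ∃ z ∈ F, z < a
  · obtain ⟨z, hzF, hza⟩ := hzlt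
    have hzG : z ∉ G := by
      intro h
      rcases hinter z hzF h with rfl | rfl <;> omega
    rcases lt_trichotomy z mG with hlt | heq | hgt
    · have hmGF : mG ∉ F := by
        intro h
        rcases hinter mG h hmGG with rfl | rfl <;> omega
      obtain ⟨u, v, huF, hvF, _, humG, hmGv, hva, _, huv⟩ :=
        consec_around hmGF hzF haF hlt (by omega)
      exact T.noncross F hF G hG (u, v) huv (mG, b) hGmm ⟨humG, hmGv, by omega⟩
    · exact hzG (heq ▸ hmGG)
    · obtain ⟨c, d, hcG, hdG, hmGc, hcz, hzd, hda, hgap, hcd⟩ :=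
        consec_around hzG hmGG haG hgt hza
      by_cases hda' : d < a
      · have hdF : d ∉ F := by
          intro h
          rcases hinter d h hdG with rfl | rfl <;> omega
        obtain ⟨p, q, hpF, hqF, hzp, hpd, hdq, hqa, _, hpq⟩ :=
          consec_around hdF hzF haF hzd hda'
        exact T.noncross G hG F hF (c, d) hcd (p, q) hpq ⟨by omega, hpd, hdq⟩
      · have hd : d = a := by omega
        subst hd
        by_cases hwc : ∃ w ∈ F, w < c
        · obtain ⟨w, hwF, hwc'⟩ := hwc
          have hcF : c ∉ F := by
            intro h
            rcases hinter c h hcG with rfl | rfl <;> omega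
          obtain ⟨u, v, huF, hvF, _, huc, hcv, hvz, _, huv⟩ :=
            consec_around hcF hwF hzF hwc' hcz
          exact T.noncross F hF G hG (u, v) huv (c, d) hcd ⟨huc, hcv, by omega⟩
        · push_neg at hwc
          have hcF : c ∉ F := by
            intro h
            rcases hinter c h hcG with rfl | rfl <;> omega
          set mF := F.min' hFne with hmF
          have hmFF : mF ∈ F := F.min'_mem hFne
          have hcmF : c ≤ mF := hwc mF hmFF
          have hcmF' : c < mF := lt_of_le_of_ne hcmF (fun h => hcF (h ▸ hmFF))
          have hmFz : mF ≤ z := Finset.min'_le F z hzF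
          set MF := F.max' hFne with hMF
          have hbMF : b ≤ MF := Finset.le_max' F b hbF
          have hFmm : (mF, MF) ∈ faceEdges F := minmax_edge hFne (by omega)
          exact T.noncross G hG F hF (c, d) hcd (mF, MF) hFmm ⟨hcmF', by omega, by omega⟩
  · push_neg at hzlt
    obtain ⟨z, hzF, hza, hzb⟩ := third_vertex T ht hF a b
    have hz : b < z := by
      have h1 := hFav z hzF
      have h2 := hzlt z hzF
      omega
    set MF := F.max' hFne with hMF
    have hzMF : z ≤ MF := Finset.le_max' F z hzF
    have hFmm : (a, MF) ∈ faceEdges F :=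
      mem_fE.mpr ⟨haF, F.max'_mem hFne, by omega,
        Or.inr fun x hx => ⟨hzlt x hx, Finset.le_max' F x hx⟩⟩
    exact T.noncross G hG F hF (mG, b) hGmm (a, MF) hFmm ⟨by omega, by omega, by omega⟩

end HardCases

section MainLemmas

variable {t n : ℕ}

lemma exists_interior (T : Tiling t n) (ht : 3 ≤ t) (hnt : t - 1 ≤ n) {S : Finset ℕ}
    (hS : S ∈ T.faces) : ∃ e, e ∈ faceEdges S ∧ e ∉ hullEdges n := by
  have hcard := T.size S hS
  have hne : S.Nonempty := by rw [← Finset.card_pos]; omega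
  have hsub := T.sub S hS
  set m := S.min' hne with hm
  set M := S.max' hne with hM
  have hMn : M ≤ n + 1 := by
    have := hsub (S.max'_mem hne)
    simp only [Finset.mem_range] at this
    omega
  have hmM : m < M := Finset.min'_lt_max'_of_card S (by omega)
  rcases gap_or_full (S.min'_mem hne) (S.max'_mem hne) with ⟨c, d, hcd, hmc, hdM, hc2, hgap⟩ | hfull
  · refine ⟨(c, d), hcd, fun hh => ?_⟩
    rcases hull_iff.mp hh with ⟨_, h⟩ | ⟨h0, h1⟩
    · omega
    · have hsub2 : S ⊆ ({0, n+1} : Finset ℕ) := by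
        intro x hx
        have h2 := hgap x hx
        have h3 := hsub hx
        simp only [Finset.mem_range] at h3
        simp only [Finset.mem_insert, Finset.mem_singleton]
        omega
      have h4 := Finset.card_le_card hsub2
      have h5 : ({0, n+1} : Finset ℕ).card ≤ 2 := (Finset.card_insert_le _ _).trans (by simp)
      omega
  · have hIcc : S = Finset.Icc m M := by
      apply Finset.Subset.antisymm
      · intro j hj
        exact Finset.mem_Icc.mpr ⟨Finset.min'_le S j hj, Finset.le_max' S j hj⟩
      · intro j hj
        rw [Finset.mem_Icc] at hj
        exact hfull j hj.1 hj.2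
    have hcard2 : M + 1 - m = t := by
      rw [← Nat.card_Icc, ← hIcc, hcard]
    refine ⟨(m, M), minmax_edge hne hmM, fun hh => ?_⟩
    rcases hull_iff.mp hh with ⟨_, h⟩ | ⟨h0, h1⟩ <;> omega

lemma earQ (T : Tiling t n) (ht : 3 ≤ t) :
    ∀ k a b, b - a = k → a + 2 ≤ b → (a, b) ∉ hullEdges n →
    ∀ F, F ∈ T.faces → (a, b) ∈ faceEdges F →
    ∃ S, IsEar T S ∧ S ⊆ Finset.Icc a b := by
  intro k
  induction k using Nat.strong_induction_on with
  | _ k IH =>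
  intro a b hk hab hnh F hF hFe
  by_cases hins : ∃ S, S ∈ T.faces ∧ (a, b) ∈ faceEdges S ∧ ∀ x ∈ S, a ≤ x ∧ x ≤ b
  · obtain ⟨G, hG, hGe, hGsub⟩ := hins
    by_cases hear : (faceEdges G \ hullEdges n).card = 1
    · exact ⟨G, isEar_iff.mpr ⟨hG, hear⟩, fun x hx => Finset.mem_Icc.mpr (hGsub x hx)⟩
    · have hmem : (a, b) ∈ faceEdges G \ hullEdges n := Finset.mem_sdiff.mpr ⟨hGe, hnh⟩
      have hex : ∃ e ∈ faceEdges G \ hullEdges n, e ≠ (a, b) := by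
        by_contra h
        push_neg at h
        have hsub : faceEdges G \ hullEdges n ⊆ {(a, b)} :=
          fun e he => Finset.mem_singleton.mpr (h e he)
        have h1 := Finset.card_le_card hsub
        have h2 : 0 < (faceEdges G \ hullEdges n).card := Finset.card_pos.mpr ⟨_, hmem⟩
        simp only [Finset.card_singleton] at h1
        omega
      obtain ⟨e, he, hene⟩ := hex
      obtain ⟨hefe, henh⟩ := Finset.mem_sdiff.mp he
      obtain ⟨c, d⟩ := e
      have h1 := mem_fE.mp hefe
      have hc := hGsub c h1.1
      have hd := hGsub d h1.2.1
      have hcd := h1.2.2.1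
      have hdn : d ≤ n + 1 := card_range_le (T.sub G hG) h1.2.1
      have hc2 : c + 2 ≤ d := by
        by_contra hcon
        exact henh (hull_iff.mpr (Or.inl ⟨by omega, by omega⟩))
      have hne2 : ¬(c = a ∧ d = b) := by
        rintro ⟨rfl, rfl⟩
        exact hene rfl
      obtain ⟨S, hS1, hS2⟩ := IH (d - c) (by omega) c d rfl hc2 henh G hG hefe
      exact ⟨S, hS1, hS2.trans (Finset.Icc_subset_Icc (by omega) (by omega))⟩
  · have hFav : ∀ x ∈ F, ¬(a < x ∧ x < b) := by
      rcases (mem_fE.mp hFe).2.2.2 with h | h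
      · exact h
      · exact absurd ⟨F, hF, hFe, h⟩ hins
    have haF : a ∈ F := (mem_fE.mp hFe).1
    have hbF : b ∈ F := (mem_fE.mp hFe).2.1
    have hbn : b ≤ n + 1 := card_range_le (T.sub F hF) hbF
    have hhull1 : (a, a + 1) ∈ hullEdges n := hull_iff.mpr (Or.inl ⟨by omega, rfl⟩)
    obtain ⟨G, hG, hGe⟩ := face_of_hull T hhull1
    have haG : a ∈ G := (mem_fE.mp hGe).1
    have ha1G : a + 1 ∈ G := (mem_fE.mp hGe).2.1
    have hGne : G.Nonempty := ⟨a, haG⟩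
    by_cases hy : ∃ y ∈ G, b < y
    · obtain ⟨y, hyG, hby⟩ := hy
      by_cases hbG : b ∈ G
      · rcases gap_or_full haG hbG with ⟨c, d, hcd, hac, hdb, hc2, hgap⟩ | hfull
        · have hne2 : ¬(c = a ∧ d = b) := by
            rintro ⟨rfl, rfl⟩
            exact hgap (c + 1) ha1G ⟨by omega, by omega⟩
          have hnint : (c, d) ∉ hullEdges n := by
            intro hh
            rcases hull_iff.mp hh with ⟨_, h⟩ | ⟨h0, h1⟩
            · omega
            · exact hnh (by
                have ha0 : a = 0 := by omega
                have hb1 : b = n + 1 := by omega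
                rw [ha0, hb1]
                exact hull_iff.mpr (Or.inr ⟨rfl, rfl⟩))
          obtain ⟨S, hS1, hS2⟩ := IH (d - c) (by omega) c d rfl hc2 hnint G hG hcd
          exact ⟨S, hS1, hS2.trans (Finset.Icc_subset_Icc hac hdb)⟩
        · exact (H1 T ht hF hG hab hFe hFav hfull hyG hby).elim
      · obtain ⟨u, v, huG, hvG, hau, hub, hbv, _, _, huv⟩ :=
          consec_around hbG ha1G hyG (by omega) hby
        exact (T.noncross F hF G hG (a, b) hFe (u, v) huv ⟨by omega, hub, hbv⟩).elim
    · push_neg at hy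
      have hGle : ∀ x ∈ G, x ≤ b := hy
      by_cases hwa : ∃ w ∈ G, w < a
      · obtain ⟨w, hwG, hwa'⟩ := hwa
        by_cases hbG : b ∈ G
        · rcases gap_or_full haG hbG with ⟨c, d, hcd, hac, hdb, hc2, hgap⟩ | hfull
          · have hne2 : ¬(c = a ∧ d = b) := by
              rintro ⟨rfl, rfl⟩
              exact hgap (c + 1) ha1G ⟨by omega, by omega⟩
            have hnint : (c, d) ∉ hullEdges n := by
              intro hh
              rcases hull_iff.mp hh with ⟨_, h⟩ | ⟨h0, h1⟩
              · omega
              · exact hnh (by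
                  have ha0 : a = 0 := by omega
                  have hb1 : b = n + 1 := by omega
                  rw [ha0, hb1]
                  exact hull_iff.mpr (Or.inr ⟨rfl, rfl⟩))
            obtain ⟨S, hS1, hS2⟩ := IH (d - c) (by omega) c d rfl hc2 hnint G hG hcd
            exact ⟨S, hS1, hS2.trans (Finset.Icc_subset_Icc hac hdb)⟩
          · exact (H2 T ht hF hG hab hFe hFav hfull hGle hwG hwa').elim
        · set g := G.max' hGne with hg
          have hga : a + 1 ≤ g := Finset.le_max' G (a+1) ha1G
          have hgb : g < b :=
            lt_of_le_of_ne (hGle g (G.max'_mem hGne)) (fun h => hbG (h ▸ G.max'_mem hGne))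
          have hmg : G.min' hGne ≤ w := Finset.min'_le G w hwG
          have hmm : (G.min' hGne, g) ∈ faceEdges G := minmax_edge hGne (by omega)
          exact (T.noncross G hG F hF (G.min' hGne, g) hmm (a, b) hFe
            ⟨by omega, by omega, hgb⟩).elim
      · push_neg at hwa
        have hGge : ∀ x ∈ G, a ≤ x := hwa
        by_cases hbG : b ∈ G
        · exact absurd ⟨G, hG, mem_fE.mpr ⟨haG, hbG, by omega,
            Or.inr fun x hx => ⟨hGge x hx, hGle x hx⟩⟩,
            fun x hx => ⟨hGge x hx, hGle x hx⟩⟩ hins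
        · set g := G.max' hGne with hg
          have hga1 : a + 1 ≤ g := Finset.le_max' G (a+1) ha1G
          have hgb : g < b :=
            lt_of_le_of_ne (hGle g (G.max'_mem hGne)) (fun h => hbG (h ▸ G.max'_mem hGne))
          have hsubIcc : G ⊆ Finset.Icc a g :=
            fun x hx => Finset.mem_Icc.mpr ⟨hGge x hx, Finset.le_max' G x hx⟩
          have hcard3 : G.card = t := T.size G hG
          have hcardIcc := Finset.card_le_card hsubIcc
          rw [Nat.card_Icc] at hcardIcc
          have hg2 : a + 2 ≤ g := by omega
          have hmin : G.min' hGne = a :=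
            le_antisymm (Finset.min'_le G a haG) (hGge (G.min' hGne) (G.min'_mem hGne))
          have hmm : (a, g) ∈ faceEdges G := by
            have h := minmax_edge hGne (by rw [hmin]; omega)
            rwa [hmin] at h
          have hnint : (a, g) ∉ hullEdges n := by
            intro hh
            rcases hull_iff.mp hh with ⟨_, h⟩ | ⟨h0, h1⟩ <;> omega
          obtain ⟨S, hS1, hS2⟩ := IH (g - a) (by omega) a g rfl hg2 hnint G hG hmm
          exact ⟨S, hS1, hS2.trans (Finset.Icc_subset_Icc le_rfl (by omega))⟩

end MainLemmas

/-- Every `t`-gonal tiling of a convex polygon with at least `2t-2` points has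
at least two ears, at least one of which is not incident to the edge
`p_1 p_{n+2}`. -/
theorem stmt10 (t n m : ℕ) (ht : 3 ≤ t) (hm : 1 ≤ m) (hn : n = (t - 2) * m)
    (hbig : 2 * t - 2 ≤ n + 2) (T : Tiling t n) :
    (∃ S S' : Finset ℕ, S ≠ S' ∧ IsEar T S ∧ IsEar T S') ∧
    (∃ S : Finset ℕ, IsEar T S ∧ (0, n + 1) ∉ faceEdges S) := by
  have hnt : t - 1 ≤ n := by omega
  have hhull0 : ((0 : ℕ), n + 1) ∈ hullEdges n := hull_iff.mpr (Or.inr ⟨rfl, rfl⟩)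
  obtain ⟨S₀, hS₀, hS₀e⟩ := face_of_hull T hhull0
  have h0S : (0 : ℕ) ∈ S₀ := (mem_fE.mp hS₀e).1
  have hn1S : n + 1 ∈ S₀ := (mem_fE.mp hS₀e).2.1
  obtain ⟨e₀, he₀, he₀h⟩ := exists_interior T ht hnt hS₀
  obtain ⟨a₀, b₀⟩ := e₀
  have h₀ := mem_fE.mp he₀
  have hb₀n : b₀ ≤ n + 1 := card_range_le (T.sub S₀ hS₀) h₀.2.1
  have ha₀2 : a₀ + 2 ≤ b₀ := by
    by_contra h
    exact he₀h (hull_iff.mpr (Or.inl ⟨by omega, by omega⟩))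
  have hne01 : ¬(a₀ = 0 ∧ b₀ = n + 1) := by
    rintro ⟨h1, h2⟩
    exact he₀h (by rw [h1, h2]; exact hhull0)
  have hgap₀ : ∀ x ∈ S₀, ¬(a₀ < x ∧ x < b₀) := by
    rcases h₀.2.2.2 with h | h
    · exact h
    · exfalso
      have h1 := (h 0 h0S).1
      have h2 := (h (n+1) hn1S).2
      exact hne01 ⟨by omega, by omega⟩
  obtain ⟨S₁, hear₁, hsub₁⟩ := earQ T ht (b₀ - a₀) a₀ b₀ rfl ha₀2 he₀h S₀ hS₀ he₀
  have hS₁card : S₁.card = t := T.size S₁ (isEar_iff.mp hear₁).1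
  have hS₁notground : ((0 : ℕ), n + 1) ∉ faceEdges S₁ := by
    intro h
    have h1 := Finset.mem_Icc.mp (hsub₁ (mem_fE.mp h).1)
    have h2 := Finset.mem_Icc.mp (hsub₁ (mem_fE.mp h).2.1)
    exact hne01 ⟨by omega, by omega⟩
  refine ⟨?_, S₁, hear₁, hS₁notground⟩
  by_cases hear₀ : (faceEdges S₀ \ hullEdges n).card = 1
  · refine ⟨S₁, S₀, ?_, hear₁, isEar_iff.mpr ⟨hS₀, hear₀⟩⟩
    intro h
    have h1 := Finset.mem_Icc.mp (hsub₁ (h ▸ h0S : (0:ℕ) ∈ S₁))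
    have h2 := Finset.mem_Icc.mp (hsub₁ (h ▸ hn1S : n + 1 ∈ S₁))
    exact hne01 ⟨by omega, by omega⟩
  · have hmem : (a₀, b₀) ∈ faceEdges S₀ \ hullEdges n := Finset.mem_sdiff.mpr ⟨he₀, he₀h⟩
    have hex : ∃ e ∈ faceEdges S₀ \ hullEdges n, e ≠ (a₀, b₀) := by
      by_contra h
      push_neg at h
      have hsub : faceEdges S₀ \ hullEdges n ⊆ {(a₀, b₀)} :=
        fun e he => Finset.mem_singleton.mpr (h e he)
      have h1 := Finset.card_le_card hsub
      have h2 : 0 < (faceEdges S₀ \ hullEdges n).card := Finset.card_pos.mpr ⟨_, hmem⟩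
      simp only [Finset.card_singleton] at h1
      omega
    obtain ⟨e₁, he₁m, he₁ne⟩ := hex
    obtain ⟨he₁, he₁h⟩ := Finset.mem_sdiff.mp he₁m
    obtain ⟨a₁, b₁⟩ := e₁
    have h₁ := mem_fE.mp he₁
    have hb₁n : b₁ ≤ n + 1 := card_range_le (T.sub S₀ hS₀) h₁.2.1
    have ha₁2 : a₁ + 2 ≤ b₁ := by
      by_contra h
      exact he₁h (hull_iff.mpr (Or.inl ⟨by omega, by omega⟩))
    have hne11 : ¬(a₁ = 0 ∧ b₁ = n + 1) := by
      rintro ⟨h1, h2⟩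
      exact he₁h (by rw [h1, h2]; exact hhull0)
    have hgap₁ : ∀ x ∈ S₀, ¬(a₁ < x ∧ x < b₁) := by
      rcases h₁.2.2.2 with h | h
      · exact h
      · exfalso
        have h1 := (h 0 h0S).1
        have h2 := (h (n+1) hn1S).2
        exact hne11 ⟨by omega, by omega⟩
    obtain ⟨S₂, hear₂, hsub₂⟩ := earQ T ht (b₁ - a₁) a₁ b₁ rfl ha₁2 he₁h S₀ hS₀ he₁
    refine ⟨S₁, S₂, ?_, hear₁, hear₂⟩
    intro heq
    have hsep : b₀ ≤ a₁ ∨ b₁ ≤ a₀ := by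
      by_contra hcon
      push_neg at hcon
      rcases lt_trichotomy a₀ a₁ with hlt | heqa | hgt
      · exact hgap₀ a₁ h₁.1 ⟨hlt, hcon.1⟩
      · rcases lt_trichotomy b₀ b₁ with h' | h' | h'
        · exact hgap₁ b₀ h₀.2.1 ⟨by omega, h'⟩
        · exact he₁ne (by rw [heqa, h'])
        · exact hgap₀ b₁ h₁.2.1 ⟨by omega, h'⟩
      · exact hgap₁ a₀ h₀.1 ⟨hgt, hcon.2⟩
    rcases hsep with hsep | hsep
    · have hs : S₁ ⊆ Finset.Icc a₁ b₀ := by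
        intro x hx
        have h1 := Finset.mem_Icc.mp (hsub₁ hx)
        have h2 := Finset.mem_Icc.mp (hsub₂ (heq ▸ hx))
        exact Finset.mem_Icc.mpr ⟨h2.1, h1.2⟩
      have hc := Finset.card_le_card hs
      rw [Nat.card_Icc] at hc
      omega
    · have hs : S₁ ⊆ Finset.Icc a₀ b₁ := by
        intro x hx
        have h1 := Finset.mem_Icc.mp (hsub₁ hx)
        have h2 := Finset.mem_Icc.mp (hsub₂ (heq ▸ hx))
        exact Finset.mem_Icc.mpr ⟨h1.1, h2.2⟩
      have hc := Finset.card_le_card hs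
      rw [Nat.card_Icc] at hc
      omega
end
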